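/- arXiv:1707.06028 — 4 statements merged into one kernel-verified Lean document; each statement's English description precedes it below -/
import Mathlib

section
/- Let n ≥ 1 be an integer, α ∈ (0,n), β > 0 and A > 0, and assume α < β. For each γ > 0 let E_γ be a measurable set with |E_γ| = |B| minimizing the functional E_γ := P + γ^{1+α} V_α + γ^{1+β} U_{β,A} among measurable sets of volume |B|. Then |E_γ Δ B| → 0 as γ → +∞. -/
open MeasureTheory Metric Filter ENNReal

noncomputable section

/-- The Lebesgue density of `E` at `x` equals `d`. -/
def HasDensity {n : ℕ} (E : Set (EuclideanSpace ℝ (Fin n)))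
    (x : EuclideanSpace ℝ (Fin n)) (d : ℝ) : Prop :=
  Filter.Tendsto
    (fun r : ℝ => (volume (E ∩ Metric.ball x r)).toReal / (volume (Metric.ball x r)).toReal)
    (nhdsWithin 0 (Set.Ioi 0)) (nhds d)

/-- The essential boundary of `E`: points where `E` has neither density 0 nor density 1. -/
def essBoundary {n : ℕ} (E : Set (EuclideanSpace ℝ (Fin n))) :
    Set (EuclideanSpace ℝ (Fin n)) :=
  {x | ¬ HasDensity E x 0 ∧ ¬ HasDensity E x 1}

/-- The perimeter of `E`: the `(n-1)`-dimensional Hausdorff measure of the essential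
boundary of `E`. -/
def perimeter {n : ℕ} (E : Set (EuclideanSpace ℝ (Fin n))) : ℝ≥0∞ :=
  μH[(n : ℝ) - 1] (essBoundary E)

/-- The Riesz energy `V_α(E) = ∫_{E×E} |x-y|^(α-n) dx dy`. -/
def rieszEnergy {n : ℕ} (α : ℝ) (E : Set (EuclideanSpace ℝ (Fin n))) : ℝ≥0∞ :=
  ∫⁻ x in E, ∫⁻ y in E, ENNReal.ofReal (‖x - y‖ ^ (α - (n : ℝ)))

/-- The potential energy `U_{β,A}(E) = A ∫_E |x|^β dx`. -/
def potEnergy {n : ℕ} (β A : ℝ) (E : Set (EuclideanSpace ℝ (Fin n))) : ℝ≥0∞ :=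
  ∫⁻ x in E, ENNReal.ofReal (A * ‖x‖ ^ β)

/-- The total energy `E_{α,β,A} = P + V_α + U_{β,A}`. -/
def totalEnergy {n : ℕ} (α β A : ℝ) (E : Set (EuclideanSpace ℝ (Fin n))) : ℝ≥0∞ :=
  perimeter E + rieszEnergy α E + potEnergy β A E

/-- `E` is a minimizer of `E_{α,β,A}` at mass `m`. -/
def IsMinimizer {n : ℕ} (α β A m : ℝ) (E : Set (EuclideanSpace ℝ (Fin n))) : Prop :=
  MeasurableSet E ∧ volume E = ENNReal.ofReal m ∧
    ∀ F : Set (EuclideanSpace ℝ (Fin n)), MeasurableSet F → volume F = ENNReal.ofReal m →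
      totalEnergy α β A E ≤ totalEnergy α β A F

/-- The unit ball of `ℝⁿ` centered at the origin. -/
def unitBall (n : ℕ) : Set (EuclideanSpace ℝ (Fin n)) := Metric.ball 0 1

/-- The rescaled functional `E_γ = P + γ^(1+α) V_α + γ^(1+β) U_{β,A}`. -/
def rescaledEnergy {n : ℕ} (γ α β A : ℝ) (E : Set (EuclideanSpace ℝ (Fin n))) : ℝ≥0∞ :=
  perimeter E + ENNReal.ofReal (γ ^ (1 + α)) * rieszEnergy α E
    + ENNReal.ofReal (γ ^ (1 + β)) * potEnergy β A E

namespace Statement9Aux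

variable {n : ℕ}

lemma hasDensity_one_of_eventually {E : Set (EuclideanSpace ℝ (Fin n))}
    {x : EuclideanSpace ℝ (Fin n)}
    (h : ∀ᶠ r in nhdsWithin (0:ℝ) (Set.Ioi 0), Metric.ball x r ⊆ E) :
    HasDensity E x 1 := by
  have h1 : ∀ᶠ r in nhdsWithin (0:ℝ) (Set.Ioi 0),
      (volume (E ∩ Metric.ball x r)).toReal / (volume (Metric.ball x r)).toReal = 1 := by
    filter_upwards [h, self_mem_nhdsWithin] with r hr hr0
    rw [Set.inter_eq_self_of_subset_right hr, div_self]
    exact ENNReal.toReal_ne_zero.mpr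
      ⟨(measure_ball_pos volume x hr0).ne', measure_ball_lt_top.ne⟩
  exact tendsto_const_nhds.congr' (by filter_upwards [h1] with r hr; rw [hr])

lemma hasDensity_zero_of_eventually {E : Set (EuclideanSpace ℝ (Fin n))}
    {x : EuclideanSpace ℝ (Fin n)}
    (h : ∀ᶠ r in nhdsWithin (0:ℝ) (Set.Ioi 0), E ∩ Metric.ball x r = ∅) :
    HasDensity E x 0 := by
  have h1 : ∀ᶠ r in nhdsWithin (0:ℝ) (Set.Ioi 0),
      (volume (E ∩ Metric.ball x r)).toReal / (volume (Metric.ball x r)).toReal = 0 := by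
    filter_upwards [h] with r hr
    rw [hr]
    simp
  exact tendsto_const_nhds.congr' (by filter_upwards [h1] with r hr; rw [hr])

lemma essBoundary_unitBall_subset :
    essBoundary (unitBall n) ⊆ Metric.sphere (0 : EuclideanSpace ℝ (Fin n)) 1 := by
  intro x hx
  by_contra hxs
  have hxd : dist x 0 ≠ 1 := by simpa [Metric.mem_sphere] using hxs
  rcases lt_or_gt_of_ne hxd with hlt | hgt
  · refine hx.2 (hasDensity_one_of_eventually ?_)
    have hmem : Set.Ioo (0:ℝ) (1 - dist x 0) ∈ nhdsWithin (0:ℝ) (Set.Ioi 0) :=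
      Ioo_mem_nhdsGT_of_mem (Set.mem_Ico.2 ⟨le_refl 0, by linarith⟩)
    filter_upwards [hmem] with r hr
    intro y hy
    have htri : dist y 0 ≤ dist y x + dist x 0 := dist_triangle y x 0
    have hyx : dist y x < r := Metric.mem_ball.1 hy
    simp only [Set.mem_Ioo] at hr
    have : dist y 0 < 1 := by linarith [hr.2]
    exact Metric.mem_ball.2 (by simpa using this)
  · refine hx.1 (hasDensity_zero_of_eventually ?_)
    have hmem : Set.Ioo (0:ℝ) (dist x 0 - 1) ∈ nhdsWithin (0:ℝ) (Set.Ioi 0) :=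
      Ioo_mem_nhdsGT_of_mem (Set.mem_Ico.2 ⟨le_refl 0, by linarith⟩)
    filter_upwards [hmem] with r hr
    rw [Set.eq_empty_iff_forall_notMem]
    rintro y ⟨hy1, hy2⟩
    have h1 : dist y 0 < 1 := by simpa [unitBall] using hy1
    have h2 : dist y x < r := Metric.mem_ball.1 hy2
    have : dist x 0 ≤ dist x y + dist y 0 := dist_triangle x y 0
    rw [dist_comm x y] at this
    simp only [Set.mem_Ioo] at hr
    linarith [hr.2]

end Statement9Aux
open scoped NNReal

namespace Statement9Aux

lemma abs_coord_le_norm {n : ℕ} (u : EuclideanSpace ℝ (Fin n)) (i : Fin n) : |u i| ≤ ‖u‖ := by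
  rw [EuclideanSpace.norm_eq]
  have h1 : |u i| = Real.sqrt (‖u i‖ ^ 2) := by
    rw [Real.sqrt_sq_eq_abs, Real.norm_eq_abs, abs_abs]
  rw [h1]
  apply Real.sqrt_le_sqrt
  exact Finset.single_le_sum (f := fun j => ‖u j‖ ^ 2) (fun j _ => by positivity)
    (Finset.mem_univ i)

lemma face_lt_top {n : ℕ} (hn : 1 ≤ n) (i : Fin n) (c : ℝ) :
    μH[(n:ℝ)-1] {x : EuclideanSpace ℝ (Fin n) | x i = c ∧ ∀ j, |x j| ≤ 1} < ⊤ := by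
  have hd : (0:ℝ) ≤ (n:ℝ) - 1 := by
    have : (1:ℝ) ≤ (n:ℝ) := by exact_mod_cast hn
    linarith
  set ι := {j : Fin n // j ≠ i} with hι
  set φ : (ι → ℝ) → EuclideanSpace ℝ (Fin n) := fun y =>
    (WithLp.equiv 2 (Fin n → ℝ)).symm (fun j => if h : j = i then c else y ⟨j, h⟩) with hφdef
  have hφapp : ∀ (y : ι → ℝ) (j : Fin n), φ y j = if h : j = i then c else y ⟨j, h⟩ := by
    intro y j; rfl
  have hφ : LipschitzWith (n : ℝ≥0) φ := by
    apply LipschitzWith.of_dist_le_mul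
    intro y y'
    rw [EuclideanSpace.dist_eq]
    have hb : ∀ j : Fin n, dist (φ y j) (φ y' j) ^ 2 ≤ dist y y' ^ 2 := by
      intro j
      by_cases h : j = i
      · rw [hφapp, hφapp, dif_pos h, dif_pos h, dist_self]
        have : (0:ℝ) ≤ dist y y' := dist_nonneg
        nlinarith
      · rw [hφapp, hφapp, dif_neg h, dif_neg h]
        have h1 := dist_le_pi_dist y y' ⟨j, h⟩
        have h2 : (0:ℝ) ≤ dist (y ⟨j, h⟩) (y' ⟨j, h⟩) := dist_nonneg
        nlinarith
    calc Real.sqrt (∑ j, dist (φ y j) (φ y' j) ^ 2)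
        ≤ Real.sqrt (∑ _j : Fin n, dist y y' ^ 2) :=
          Real.sqrt_le_sqrt (Finset.sum_le_sum fun j _ => hb j)
      _ = Real.sqrt ((n:ℝ) * dist y y' ^ 2) := by
          rw [Finset.sum_const, Finset.card_univ, Fintype.card_fin, nsmul_eq_mul]
      _ ≤ Real.sqrt (((n:ℝ) * dist y y') ^ 2) := by
          apply Real.sqrt_le_sqrt
          have : (1:ℝ) ≤ (n:ℝ) := by exact_mod_cast hn
          nlinarith [dist_nonneg (x := y) (y := y'), sq_nonneg (dist y y')]
      _ = (n:ℝ) * dist y y' := by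
          rw [Real.sqrt_sq (by positivity)]
      _ = ((n : ℝ≥0) : ℝ) * dist y y' := by norm_cast
  have hsub : {x : EuclideanSpace ℝ (Fin n) | x i = c ∧ ∀ j, |x j| ≤ 1}
      ⊆ φ '' (Metric.closedBall 0 1) := by
    rintro x ⟨hxi, hxj⟩
    refine ⟨fun j => x j.1, ?_, ?_⟩
    · rw [Metric.mem_closedBall]
      refine (dist_pi_le_iff zero_le_one).2 fun j => ?_
      simpa [Real.dist_eq] using hxj j.1
    · rw [hφdef, Equiv.symm_apply_eq]
      funext j
      by_cases h : j = i
      · rw [dif_pos h]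
        subst h
        simpa using hxi.symm
      · rw [dif_neg h]
        rfl
  have hcard : ((Fintype.card ι : ℕ) : ℝ) = (n:ℝ) - 1 := by
    have h1 : Fintype.card ι = n - 1 := by
      simp [hι, Fintype.card_subtype_compl]
    rw [h1, Nat.cast_sub hn, Nat.cast_one]
  have hvol : μH[(n:ℝ)-1] (Metric.closedBall (0 : ι → ℝ) 1) < ⊤ := by
    rw [← hcard, hausdorffMeasure_pi_real]
    exact (isCompact_closedBall _ _).measure_lt_top
  calc μH[(n:ℝ)-1] {x : EuclideanSpace ℝ (Fin n) | x i = c ∧ ∀ j, |x j| ≤ 1}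
      ≤ μH[(n:ℝ)-1] (φ '' (Metric.closedBall 0 1)) := measure_mono hsub
    _ ≤ ((n : ℝ≥0) : ℝ≥0∞) ^ ((n:ℝ)-1) * μH[(n:ℝ)-1] (Metric.closedBall (0 : ι → ℝ) 1) :=
        hφ.hausdorffMeasure_image_le hd _
    _ < ⊤ := ENNReal.mul_lt_top
        (ENNReal.rpow_lt_top_of_nonneg hd ENNReal.coe_ne_top) hvol

lemma sphere_lt_top {n : ℕ} (hn : 1 ≤ n) :
    μH[(n:ℝ)-1] (Metric.sphere (0 : EuclideanSpace ℝ (Fin n)) 1) < ⊤ := by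
  haveI : Nonempty (Fin n) := ⟨⟨0, hn⟩⟩
  have hd : (0:ℝ) ≤ (n:ℝ) - 1 := by
    have : (1:ℝ) ≤ (n:ℝ) := by exact_mod_cast hn
    linarith
  set Q : Set (EuclideanSpace ℝ (Fin n)) := {x | (∀ j, |x j| ≤ 1) ∧ ∃ i, |x i| = 1} with hQ
  set π : EuclideanSpace ℝ (Fin n) → EuclideanSpace ℝ (Fin n) := fun x => ‖x‖⁻¹ • x with hπ
  have hQnorm : ∀ x ∈ Q, 1 ≤ ‖x‖ := by
    rintro x ⟨hb, i, hi⟩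
    calc (1:ℝ) = |x i| := hi.symm
      _ ≤ ‖x‖ := abs_coord_le_norm x i
  have hLip : LipschitzOnWith 2 π Q := by
    apply LipschitzOnWith.of_dist_le_mul
    intro x hx y hy
    have hx1 := hQnorm x hx
    have hy1 := hQnorm y hy
    have hx0 : ‖x‖ ≠ 0 := by positivity
    have hy0 : ‖y‖ ≠ 0 := by positivity
    rw [dist_eq_norm, dist_eq_norm]
    have key : π x - π y = ‖x‖⁻¹ • (x - y) + (‖x‖⁻¹ - ‖y‖⁻¹) • y := by
      rw [hπ]
      simp only [smul_sub, sub_smul]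
      abel
    have habs : |‖x‖⁻¹ - ‖y‖⁻¹| * ‖y‖ ≤ ‖x - y‖ := by
      have h1 : ‖x‖⁻¹ - ‖y‖⁻¹ = (‖y‖ - ‖x‖) / (‖x‖ * ‖y‖) := by
        field_simp
      rw [h1, abs_div, abs_of_pos (by positivity : (0:ℝ) < ‖x‖ * ‖y‖)]
      have h2 : |‖y‖ - ‖x‖| / (‖x‖ * ‖y‖) * ‖y‖ = |‖y‖ - ‖x‖| / ‖x‖ := by
        field_simp
      rw [h2]
      have h3 : |‖y‖ - ‖x‖| / ‖x‖ ≤ |‖y‖ - ‖x‖| := by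
        apply div_le_self (abs_nonneg _) hx1
      refine h3.trans ?_
      rw [abs_sub_comm]
      exact abs_norm_sub_norm_le x y
    calc ‖π x - π y‖ ≤ ‖‖x‖⁻¹ • (x - y)‖ + ‖(‖x‖⁻¹ - ‖y‖⁻¹) • y‖ := by
          rw [key]; exact norm_add_le _ _
      _ = ‖x‖⁻¹ * ‖x - y‖ + |‖x‖⁻¹ - ‖y‖⁻¹| * ‖y‖ := by
          rw [norm_smul, norm_smul, Real.norm_eq_abs, Real.norm_eq_abs,
            abs_of_pos (by positivity : (0:ℝ) < ‖x‖⁻¹)]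
      _ ≤ 1 * ‖x - y‖ + ‖x - y‖ := by
          gcongr
          · exact inv_le_one_of_one_le₀ hx1
      _ = ((2 : ℝ≥0) : ℝ) * ‖x - y‖ := by push_cast; ring
  have hsurj : Metric.sphere (0 : EuclideanSpace ℝ (Fin n)) 1 ⊆ π '' Q := by
    intro u hu
    have hu1 : ‖u‖ = 1 := by
      have := Metric.mem_sphere.1 hu
      simpa [dist_zero_right] using this
    obtain ⟨i, hi⟩ := Finite.exists_max (fun j : Fin n => |u j|)
    set M := |u i| with hM
    have hMpos : 0 < M := by
      rcases lt_or_ge 0 M with h | h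
      · exact h
      · exfalso
        have hz : ∀ j, ‖u j‖ = 0 := fun j => by
          have := (hi j).trans h
          have := abs_nonneg (u j)
          rw [Real.norm_eq_abs]
          linarith [hi j]
        have : ‖u‖ = 0 := by
          rw [EuclideanSpace.norm_eq]
          have : ∀ j ∈ Finset.univ, ‖u j‖ ^ 2 = 0 := fun j _ => by rw [hz j]; ring
          rw [Finset.sum_eq_zero this, Real.sqrt_zero]
        rw [hu1] at this
        norm_num at this
    refine ⟨M⁻¹ • u, ⟨?_, ⟨i, ?_⟩⟩, ?_⟩
    · intro j
      have happ : (M⁻¹ • u) j = M⁻¹ * u j := rfl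
      rw [happ, abs_mul, abs_inv, abs_of_pos hMpos, ← div_eq_inv_mul, div_le_one hMpos]
      exact hi j
    · have happ : (M⁻¹ • u) i = M⁻¹ * u i := rfl
      rw [happ, abs_mul, abs_inv, abs_of_pos hMpos]
      field_simp
      exact hM.symm
    · show ‖M⁻¹ • u‖⁻¹ • (M⁻¹ • u) = u
      rw [norm_smul, Real.norm_eq_abs, abs_inv, abs_of_pos hMpos, hu1, mul_one,
        inv_inv, smul_smul, mul_inv_cancel₀ hMpos.ne', one_smul]
  have hQsub : Q ⊆ ⋃ i : Fin n,
      ({x : EuclideanSpace ℝ (Fin n) | x i = 1 ∧ ∀ j, |x j| ≤ 1}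
        ∪ {x : EuclideanSpace ℝ (Fin n) | x i = -1 ∧ ∀ j, |x j| ≤ 1}) := by
    rintro x ⟨hb, i, hi⟩
    refine Set.mem_iUnion.2 ⟨i, ?_⟩
    rcases abs_eq (by norm_num : (0:ℝ) ≤ 1) |>.1 hi with h | h
    · exact Or.inl ⟨h, hb⟩
    · exact Or.inr ⟨h, hb⟩
  have hQfin : μH[(n:ℝ)-1] Q < ⊤ := by
    refine lt_of_le_of_lt (measure_mono hQsub) ?_
    refine lt_of_le_of_lt (measure_iUnion_le _) ?_
    rw [tsum_fintype]
    apply ENNReal.sum_lt_top.2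
    intro i _
    exact lt_of_le_of_lt (measure_union_le _ _)
      (ENNReal.add_lt_top.2 ⟨face_lt_top hn i 1, face_lt_top hn i (-1)⟩)
  calc μH[(n:ℝ)-1] (Metric.sphere (0 : EuclideanSpace ℝ (Fin n)) 1)
      ≤ μH[(n:ℝ)-1] (π '' Q) := measure_mono hsurj
    _ ≤ ((2 : ℝ≥0) : ℝ≥0∞) ^ ((n:ℝ)-1) * μH[(n:ℝ)-1] Q :=
        hLip.hausdorffMeasure_image_le hd
    _ < ⊤ := ENNReal.mul_lt_top
        (ENNReal.rpow_lt_top_of_nonneg hd ENNReal.coe_ne_top) hQfin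

end Statement9Aux
namespace Statement9Aux

lemma nontrivial_euclidean {n : ℕ} (hn : 1 ≤ n) :
    Nontrivial (EuclideanSpace ℝ (Fin n)) := by
  refine nontrivial_of_ne (EuclideanSpace.single ⟨0, hn⟩ 1) 0 ?_
  intro h
  have := congrArg (fun v => v ⟨0, hn⟩) h
  simp [EuclideanSpace.single_apply] at this

lemma kernel_lt_top {n : ℕ} (hn : 1 ≤ n) {α : ℝ} (hα0 : 0 < α) (hαn : α < n) :
    ∫⁻ z in Metric.ball (0 : EuclideanSpace ℝ (Fin n)) 2,
      ENNReal.ofReal (‖z‖ ^ (α - (n:ℝ))) < ⊤ := by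
  haveI := nontrivial_euclidean hn
  set f : EuclideanSpace ℝ (Fin n) → ℝ≥0∞ := fun z => ENNReal.ofReal (‖z‖ ^ (α - (n:ℝ)))
    with hf
  set S : ℕ → Set (EuclideanSpace ℝ (Fin n)) :=
    fun k => {z | (1/2:ℝ)^k ≤ ‖z‖ ∧ ‖z‖ < 2*(1/2:ℝ)^k} with hS
  have hcover : Metric.ball (0 : EuclideanSpace ℝ (Fin n)) 2 ⊆ {0} ∪ ⋃ k, S k := by
    intro z hz
    have hz2 : ‖z‖ < 2 := mem_ball_zero_iff.1 hz
    rcases eq_or_ne z 0 with h | h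
    · exact Or.inl (by simp [h])
    · right
      have hz0 : 0 < ‖z‖ := norm_pos_iff.2 h
      have hex : ∃ k : ℕ, (1/2:ℝ)^k ≤ ‖z‖ := by
        obtain ⟨k, hk⟩ := exists_pow_lt_of_lt_one hz0 (by norm_num : (1/2:ℝ) < 1)
        exact ⟨k, hk.le⟩
      set k₀ := Nat.find hex with hk₀
      refine Set.mem_iUnion.2 ⟨k₀, Nat.find_spec hex, ?_⟩
      rcases Nat.eq_zero_or_pos k₀ with h0 | hpos
      · rw [h0]
        norm_num
        exact hz2
      · have hmin := Nat.find_min hex (Nat.sub_lt hpos one_pos)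
        push_neg at hmin
        have hk : k₀ - 1 + 1 = k₀ := Nat.succ_pred_eq_of_pos hpos
        have h2 : 2*(1/2:ℝ)^k₀ = (1/2:ℝ)^(k₀-1) := by
          conv_lhs => rw [← hk]
          rw [pow_succ]
          ring
        rw [h2]
        exact hmin
  have hsingle : ∫⁻ z in ({0} : Set (EuclideanSpace ℝ (Fin n))), f z = 0 := by
    have : ∫⁻ z in ({0} : Set (EuclideanSpace ℝ (Fin n))), f z
        = ∫⁻ _ in ({0} : Set (EuclideanSpace ℝ (Fin n))), (0:ℝ≥0∞) := by
      apply setLIntegral_congr_fun (measurableSet_singleton 0)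
      intro x hx
      rw [Set.mem_singleton_iff] at hx
      rw [hf]
      simp only [hx, norm_zero]
      rw [Real.zero_rpow (by linarith : α - (n:ℝ) ≠ 0)]
      simp
    rw [this, lintegral_zero]
  have hterm : ∀ k : ℕ, ∫⁻ z in S k, f z
      ≤ (ENNReal.ofReal (2^(n:ℕ)) * volume (Metric.ball (0 : EuclideanSpace ℝ (Fin n)) 1))
        * ENNReal.ofReal ((1/2:ℝ)^α) ^ k := by
    intro k
    set t : ℝ := (1/2:ℝ)^k with ht
    have ht0 : 0 < t := by positivity
    have hSmeas : MeasurableSet (S k) := by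
      apply MeasurableSet.inter
      · exact (isClosed_le continuous_const continuous_norm).measurableSet
      · exact (isOpen_lt continuous_norm continuous_const).measurableSet
    have hmono : ∫⁻ z in S k, f z ≤ ∫⁻ _ in S k, ENNReal.ofReal (t ^ (α - (n:ℝ))) := by
      apply setLIntegral_mono' hSmeas
      intro z hz
      apply ENNReal.ofReal_le_ofReal
      exact Real.rpow_le_rpow_of_nonpos ht0 hz.1 (by linarith)
    have hballsub : S k ⊆ Metric.ball (0 : EuclideanSpace ℝ (Fin n)) (2*t) :=
      fun z hz => mem_ball_zero_iff.2 hz.2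
    have hvol : volume (Metric.ball (0 : EuclideanSpace ℝ (Fin n)) (2*t))
        = ENNReal.ofReal ((2*t)^(n:ℕ)) * volume (Metric.ball (0 : EuclideanSpace ℝ (Fin n)) 1) := by
      rw [Measure.addHaar_ball volume 0 (by positivity : (0:ℝ) ≤ 2*t), finrank_euclideanSpace_fin]
    calc ∫⁻ z in S k, f z ≤ ∫⁻ _ in S k, ENNReal.ofReal (t ^ (α - (n:ℝ))) := hmono
      _ = ENNReal.ofReal (t ^ (α - (n:ℝ))) * volume (S k) := setLIntegral_const _ _
      _ ≤ ENNReal.ofReal (t ^ (α - (n:ℝ)))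
          * (ENNReal.ofReal ((2*t)^(n:ℕ)) * volume (Metric.ball (0:EuclideanSpace ℝ (Fin n)) 1)) := by
          rw [← hvol]
          exact mul_le_mul_right (measure_mono hballsub) _
      _ = (ENNReal.ofReal (2^(n:ℕ)) * volume (Metric.ball (0:EuclideanSpace ℝ (Fin n)) 1))
          * ENNReal.ofReal ((1/2:ℝ)^α) ^ k := by
          have e : t ^ (α - (n:ℝ)) * (2*t)^(n:ℕ) = 2^(n:ℕ) * ((1/2:ℝ)^α)^k := by
            have e1 : ((2:ℝ)*t)^(n:ℕ) = 2^(n:ℕ) * t^(n:ℕ) := mul_pow 2 t n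
            have e2 : t^(n:ℕ) = t ^ ((n:ℕ):ℝ) := (Real.rpow_natCast t n).symm
            have e3 : t ^ (α - (n:ℝ)) * t ^ ((n:ℕ):ℝ) = t ^ α := by
              rw [← Real.rpow_add ht0]
              norm_num
            have e4 : t ^ α = ((1/2:ℝ)^α)^k := by
              rw [ht, ← Real.rpow_natCast (1/2:ℝ) k, ← Real.rpow_mul (by norm_num : (0:ℝ) ≤ 1/2),
                mul_comm, Real.rpow_mul (by norm_num : (0:ℝ) ≤ 1/2), Real.rpow_natCast]
            rw [e1, ← mul_assoc, mul_comm (t ^ (α - (n:ℝ))) (2^(n:ℕ)), mul_assoc, e2, e3, e4]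
          rw [← mul_assoc, ← ENNReal.ofReal_mul (by positivity : (0:ℝ) ≤ t ^ (α - (n:ℝ))), e,
            ENNReal.ofReal_mul (by positivity : (0:ℝ) ≤ (2:ℝ)^(n:ℕ)),
            ENNReal.ofReal_pow (by positivity : (0:ℝ) ≤ (1/2:ℝ)^α)]
          ring
  have hsum : ∑' k, ∫⁻ z in S k, f z < ⊤ := by
    apply lt_of_le_of_lt (ENNReal.tsum_le_tsum hterm)
    rw [ENNReal.tsum_mul_left]
    apply ENNReal.mul_lt_top
    · exact ENNReal.mul_lt_top ENNReal.ofReal_lt_top measure_ball_lt_top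
    · rw [tsum_geometric]
      rw [ENNReal.inv_lt_top]
      apply tsub_pos_of_lt
      rw [← ENNReal.ofReal_one]
      apply ENNReal.ofReal_lt_ofReal_iff_of_nonneg (by positivity) |>.2
      exact Real.rpow_lt_one (by norm_num) (by norm_num) hα0
  calc ∫⁻ z in Metric.ball (0 : EuclideanSpace ℝ (Fin n)) 2, f z
      ≤ ∫⁻ z in ({0} : Set (EuclideanSpace ℝ (Fin n))) ∪ ⋃ k, S k, f z :=
        lintegral_mono_set hcover
    _ ≤ (∫⁻ z in ({0} : Set (EuclideanSpace ℝ (Fin n))), f z) + ∫⁻ z in ⋃ k, S k, f z :=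
        lintegral_union_le _ _ _
    _ ≤ 0 + ∑' k, ∫⁻ z in S k, f z := by
        rw [hsingle]
        exact add_le_add_right (lintegral_iUnion_le _ _) 0
    _ < ⊤ := by rw [zero_add]; exact hsum

lemma riesz_unitBall_lt_top {n : ℕ} (hn : 1 ≤ n) {α : ℝ} (hα0 : 0 < α) (hαn : α < n) :
    rieszEnergy α (unitBall n) < ⊤ := by
  haveI := nontrivial_euclidean hn
  set f : EuclideanSpace ℝ (Fin n) → ℝ≥0∞ := fun z => ENNReal.ofReal (‖z‖ ^ (α - (n:ℝ)))
    with hf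
  set C := ∫⁻ z in Metric.ball (0 : EuclideanSpace ℝ (Fin n)) 2, f z with hC
  have hCfin : C < ⊤ := kernel_lt_top hn hα0 hαn
  have inner : ∀ x ∈ unitBall n,
      ∫⁻ y in unitBall n, ENNReal.ofReal (‖x - y‖ ^ (α - (n:ℝ))) ≤ C := by
    intro x hx
    have hxn : ‖x‖ < 1 := mem_ball_zero_iff.1 hx
    have hsub : unitBall n ⊆ Metric.ball x 2 := by
      intro y hy
      have hyn : ‖y‖ < 1 := mem_ball_zero_iff.1 hy
      rw [Metric.mem_ball, dist_eq_norm]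
      calc ‖y - x‖ ≤ ‖y‖ + ‖x‖ := norm_sub_le y x
        _ < 2 := by linarith
    have himg : (fun z => x - z) '' Metric.ball x 2
        = Metric.ball (0 : EuclideanSpace ℝ (Fin n)) 2 := by
      ext w
      constructor
      · rintro ⟨y, hy, rfl⟩
        rw [Metric.mem_ball, dist_eq_norm] at hy
        rw [mem_ball_zero_iff]
        rwa [← norm_neg, neg_sub] at hy
      · intro hw
        rw [mem_ball_zero_iff] at hw
        refine ⟨x - w, ?_, sub_sub_cancel x w⟩
        rw [Metric.mem_ball, dist_eq_norm]
        simpa using hw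
    have hchg : ∫⁻ y in Metric.ball x 2, f (x - y) = C := by
      rw [hC, ← himg]
      exact (Measure.measurePreserving_sub_left volume x).setLIntegral_comp_emb
        (MeasurableEquiv.subLeft x).measurableEmbedding f _
    calc ∫⁻ y in unitBall n, ENNReal.ofReal (‖x - y‖ ^ (α - (n:ℝ)))
        ≤ ∫⁻ y in Metric.ball x 2, ENNReal.ofReal (‖x - y‖ ^ (α - (n:ℝ))) :=
          lintegral_mono_set hsub
      _ = C := hchg
  calc rieszEnergy α (unitBall n)
      ≤ ∫⁻ _ in unitBall n, C := setLIntegral_mono' measurableSet_ball inner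
    _ = C * volume (unitBall n) := setLIntegral_const _ _
    _ < ⊤ := ENNReal.mul_lt_top hCfin measure_ball_lt_top

lemma pot_unitBall_lt_top {n : ℕ} {β A : ℝ} (hβ : 0 < β) (hA : 0 < A) :
    potEnergy β A (unitBall n) < ⊤ := by
  calc potEnergy β A (unitBall n) ≤ ∫⁻ _ in unitBall n, ENNReal.ofReal A := by
        apply setLIntegral_mono' measurableSet_ball
        intro x hx
        apply ENNReal.ofReal_le_ofReal
        have h1 : ‖x‖ ^ β ≤ 1 :=
          Real.rpow_le_one (norm_nonneg x) (mem_ball_zero_iff.1 hx).le hβ.le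
        nlinarith
    _ = ENNReal.ofReal A * volume (unitBall n) := setLIntegral_const _ _
    _ < ⊤ := ENNReal.mul_lt_top ENNReal.ofReal_lt_top measure_ball_lt_top

end Statement9Aux
namespace Statement9Aux

lemma stability {n : ℕ} (hn : 1 ≤ n) {β A : ℝ} (hβ : 0 < β) (hA : 0 < A) {ε : ℝ} (hε : 0 < ε) :
    ∃ c : ℝ, 0 < c ∧ ∀ F : Set (EuclideanSpace ℝ (Fin n)), MeasurableSet F →
      volume F = volume (unitBall n) →
      ENNReal.ofReal ε ≤ volume (symmDiff F (unitBall n)) →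
      potEnergy β A (unitBall n) + ENNReal.ofReal c ≤ potEnergy β A F := by
  haveI := nontrivial_euclidean hn
  set B := unitBall n with hBdef
  have hBball : B = Metric.ball (0 : EuclideanSpace ℝ (Fin n)) 1 := rfl
  have hBmeas : MeasurableSet B := by rw [hBball]; exact measurableSet_ball
  have hvolBfin : volume B < ⊤ := by rw [hBball]; exact measure_ball_lt_top
  have hvolBpos : 0 < volume B := by rw [hBball]; exact measure_ball_pos volume 0 one_pos
  set b := (volume B).toReal with hb
  have hbpos : 0 < b := ENNReal.toReal_pos hvolBpos.ne' hvolBfin.ne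
  set ε₀ := min ε b with hε₀
  have hε₀pos : 0 < ε₀ := lt_min hε hbpos
  have hε₀le : ε₀ ≤ ε := min_le_left _ _
  have hε₀b : ε₀ ≤ b := min_le_right _ _
  set t := ε₀ / (8*b) with htdef
  have ht0 : 0 < t := by positivity
  have ht1 : t < 1 := by
    rw [htdef, div_lt_one (by positivity)]
    nlinarith
  set r := (1 - t) ^ ((n:ℝ)⁻¹) with hrdef
  have hr0 : 0 < r := Real.rpow_pos_of_pos (by linarith) _
  have hrn : r ^ (n:ℕ) = 1 - t := by
    rw [hrdef]
    exact Real.rpow_inv_natCast_pow (by linarith) (by omega)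
  have hr1 : r < 1 := by
    by_contra h
    push_neg at h
    have : (1:ℝ) ≤ r ^ (n:ℕ) := one_le_pow₀ h
    rw [hrn] at this
    linarith
  have hrβ : r ^ β < 1 := Real.rpow_lt_one hr0.le hr1 hβ
  have hrβ0 : 0 ≤ r ^ β := (Real.rpow_pos_of_pos hr0 β).le
  refine ⟨A * (1 - r^β) * (ε₀/4), mul_pos (mul_pos hA (by linarith)) (by linarith), ?_⟩
  set c := A * (1 - r^β) * (ε₀/4) with hc
  intro F hFmeas hFvol hFsym
  set g : EuclideanSpace ℝ (Fin n) → ℝ≥0∞ := fun x => ENNReal.ofReal (A * ‖x‖^β) with hg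
  set G := B \ F with hG
  have hGmeas : MeasurableSet G := hBmeas.diff hFmeas
  set μ₁ := volume (F \ B) with hμ₁
  set μ₂ := volume G with hμ₂
  have hinterfin : volume (F ∩ B) < ⊤ :=
    lt_of_le_of_lt (measure_mono Set.inter_subset_right) hvolBfin
  have hsplitF : volume (F ∩ B) + μ₁ = volume F := measure_inter_add_diff F hBmeas
  have hsplitB : volume (B ∩ F) + μ₂ = volume B := measure_inter_add_diff B hFmeas
  have hμeq : μ₁ = μ₂ := by
    have h1 : volume (F ∩ B) + μ₁ = volume (F ∩ B) + μ₂ := by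
      rw [hsplitF, hFvol, ← hsplitB, Set.inter_comm]
    exact (ENNReal.add_right_inj hinterfin.ne).1 h1
  have hμ₂' : ENNReal.ofReal (ε₀/2) ≤ μ₂ := by
    by_contra h
    push_neg at h
    have hlt : volume (symmDiff F B) < ENNReal.ofReal ε := by
      calc volume (symmDiff F B) ≤ μ₁ + μ₂ := by
            rw [symmDiff_def]
            exact measure_union_le _ _
        _ = μ₂ + μ₂ := by rw [hμeq]
        _ < ENNReal.ofReal (ε₀/2) + ENNReal.ofReal (ε₀/2) := ENNReal.add_lt_add h h
        _ = ENNReal.ofReal ε₀ := by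
            rw [← ENNReal.ofReal_add (by positivity) (by positivity)]
            norm_num
        _ ≤ ENNReal.ofReal ε := ENNReal.ofReal_le_ofReal hε₀le
    exact absurd hFsym (not_le.2 hlt)
  set Br := Metric.ball (0 : EuclideanSpace ℝ (Fin n)) r with hBr
  have hBrsub : Br ⊆ B := by rw [hBball, hBr]; exact ball_subset_ball hr1.le
  have hvolB' : volume B = ENNReal.ofReal b := (ENNReal.ofReal_toReal hvolBfin.ne).symm
  have hvolBr : volume Br = ENNReal.ofReal ((1-t) * b) := by
    rw [hBr, Measure.addHaar_ball volume 0 hr0.le, finrank_euclideanSpace_fin, hrn,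
      ← hBball, hvolB', ← ENNReal.ofReal_mul (by linarith)]
  have htb : t * b = ε₀/8 := by
    rw [htdef]
    field_simp
  have hdiff : volume (B \ Br) = ENNReal.ofReal (ε₀/8) := by
    rw [measure_diff hBrsub measurableSet_ball.nullMeasurableSet
        (by rw [hvolBr]; exact ENNReal.ofReal_ne_top),
      hvolB', hvolBr, ← ENNReal.ofReal_sub _ (by nlinarith), ← htb]
    congr 1
    ring
  have hsplitG : volume (G ∩ Br) + volume (G \ Br) = μ₂ :=
    measure_inter_add_diff G measurableSet_ball
  have hGBr : ENNReal.ofReal (ε₀/4) ≤ volume (G ∩ Br) := by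
    have h1 : volume (G \ Br) ≤ ENNReal.ofReal (ε₀/8) := by
      calc volume (G \ Br) ≤ volume (B \ Br) :=
            measure_mono (Set.diff_subset_diff_left Set.diff_subset)
        _ = ENNReal.ofReal (ε₀/8) := hdiff
    have h2 : ENNReal.ofReal (3*ε₀/8) + ENNReal.ofReal (ε₀/8)
        ≤ volume (G ∩ Br) + ENNReal.ofReal (ε₀/8) := by
      calc ENNReal.ofReal (3*ε₀/8) + ENNReal.ofReal (ε₀/8)
          = ENNReal.ofReal (ε₀/2) := by
            rw [← ENNReal.ofReal_add (by positivity) (by positivity)]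
            congr 1
            ring
        _ ≤ μ₂ := hμ₂'
        _ = volume (G ∩ Br) + volume (G \ Br) := hsplitG.symm
        _ ≤ volume (G ∩ Br) + ENNReal.ofReal (ε₀/8) := add_le_add_right h1 _
    have h4 := (ENNReal.add_le_add_iff_right ENNReal.ofReal_ne_top).1 h2
    calc ENNReal.ofReal (ε₀/4) ≤ ENNReal.ofReal (3*ε₀/8) :=
          ENNReal.ofReal_le_ofReal (by linarith)
      _ ≤ volume (G ∩ Br) := h4
  -- lower bound for integral over F \ B
  have hFout : ENNReal.ofReal A * μ₁ ≤ ∫⁻ x in F \ B, g x := by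
    rw [hμ₁, ← setLIntegral_const]
    apply setLIntegral_mono' (hFmeas.diff hBmeas)
    intro x hx
    apply ENNReal.ofReal_le_ofReal
    have hx1 : 1 ≤ ‖x‖ := by
      have hxB := hx.2
      rw [hBball] at hxB
      simpa using mem_ball_zero_iff.not.1 hxB
    nlinarith [Real.one_le_rpow hx1 hβ.le]
  -- upper bound for integral over G
  have hdisj2 : Disjoint (G ∩ Br) (G \ Br) :=
    Set.disjoint_left.2 fun x hx1 hx2 => hx2.2 hx1.2
  have hGsplit : ∫⁻ x in G, g x = (∫⁻ x in G ∩ Br, g x) + ∫⁻ x in G \ Br, g x := by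
    rw [← lintegral_union (hGmeas.diff measurableSet_ball) hdisj2, Set.inter_union_diff]
  have hGin1 : ∫⁻ x in G ∩ Br, g x ≤ ENNReal.ofReal (A * r^β) * volume (G ∩ Br) := by
    rw [← setLIntegral_const]
    apply setLIntegral_mono' (hGmeas.inter measurableSet_ball)
    intro x hx
    apply ENNReal.ofReal_le_ofReal
    have hxr : ‖x‖ < r := mem_ball_zero_iff.1 hx.2
    have : ‖x‖ ^ β ≤ r ^ β := Real.rpow_le_rpow (norm_nonneg x) hxr.le hβ.le
    nlinarith
  have hGin2 : ∫⁻ x in G \ Br, g x ≤ ENNReal.ofReal A * volume (G \ Br) := by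
    rw [← setLIntegral_const]
    apply setLIntegral_mono' (hGmeas.diff measurableSet_ball)
    intro x hx
    apply ENNReal.ofReal_le_ofReal
    have hxB : x ∈ B := hx.1.1
    rw [hBball] at hxB
    have : ‖x‖ ^ β ≤ 1 := Real.rpow_le_one (norm_nonneg x) (mem_ball_zero_iff.1 hxB).le hβ.le
    nlinarith
  -- decompose energies
  have hdisjBF : Disjoint (B ∩ F) (B \ F) := Set.disjoint_left.2 fun x hx1 hx2 => hx2.2 hx1.2
  have hdisjFB : Disjoint (F ∩ B) (F \ B) := Set.disjoint_left.2 fun x hx1 hx2 => hx2.2 hx1.2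
  have hpotB : potEnergy β A B = (∫⁻ x in B ∩ F, g x) + ∫⁻ x in G, g x := by
    simp only [potEnergy, ← hBdef]
    rw [← lintegral_union hGmeas hdisjBF, Set.inter_union_diff]
  have hpotF : potEnergy β A F = (∫⁻ x in F ∩ B, g x) + ∫⁻ x in F \ B, g x := by
    simp only [potEnergy]
    rw [← lintegral_union (hFmeas.diff hBmeas) hdisjFB, Set.inter_union_diff]
  rw [hpotB, hpotF, Set.inter_comm B F, add_assoc]
  apply add_le_add_right
  -- main estimate
  have hofA : ENNReal.ofReal A = ENNReal.ofReal (A * r^β) + ENNReal.ofReal (A * (1 - r^β)) := by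
    rw [← ENNReal.ofReal_add (by positivity) (mul_nonneg hA.le (by linarith))]
    congr 1
    ring
  calc (∫⁻ x in G, g x) + ENNReal.ofReal c
      ≤ (ENNReal.ofReal (A * r^β) * volume (G ∩ Br) + ENNReal.ofReal A * volume (G \ Br))
        + ENNReal.ofReal c := by
        rw [hGsplit]
        exact add_le_add_left (add_le_add hGin1 hGin2) _
    _ ≤ ENNReal.ofReal (A * r^β) * volume (G ∩ Br) + ENNReal.ofReal A * volume (G \ Br)
        + ENNReal.ofReal (A * (1 - r^β)) * volume (G ∩ Br) := by
        apply add_le_add_right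
        calc ENNReal.ofReal (A * (1 - r^β) * (ε₀/4))
            = ENNReal.ofReal (A * (1 - r^β)) * ENNReal.ofReal (ε₀/4) := by
              rw [← ENNReal.ofReal_mul (mul_nonneg hA.le (by linarith))]
          _ ≤ ENNReal.ofReal (A * (1 - r^β)) * volume (G ∩ Br) :=
              mul_le_mul_right hGBr _
    _ = ENNReal.ofReal A * volume (G ∩ Br) + ENNReal.ofReal A * volume (G \ Br) := by
        rw [add_right_comm, ← add_mul, ← hofA]
    _ = ENNReal.ofReal A * μ₂ := by
        rw [← mul_add, hsplitG]
    _ = ENNReal.ofReal A * μ₁ := by rw [hμeq]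
    _ ≤ ∫⁻ x in F \ B, g x := hFout

end Statement9Aux

/-- If `α < β` and `E_γ` minimizes the rescaled functional at volume `|B|` for each
`γ > 0`, then `|E_γ Δ B| → 0` as `γ → ∞`. -/
theorem statement9 (n : ℕ) (hn : 1 ≤ n) (α β A : ℝ)
    (hα0 : 0 < α) (hαn : α < n) (hβ : 0 < β) (hA : 0 < A) (hαβ : α < β)
    (E : ℝ → Set (EuclideanSpace ℝ (Fin n)))
    (hE : ∀ γ, 0 < γ → MeasurableSet (E γ) ∧ volume (E γ) = volume (unitBall n) ∧
      ∀ F : Set (EuclideanSpace ℝ (Fin n)), MeasurableSet F →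
        volume F = volume (unitBall n) →
          rescaledEnergy γ α β A (E γ) ≤ rescaledEnergy γ α β A F) :
    Filter.Tendsto (fun γ : ℝ => volume (symmDiff (E γ) (unitBall n)))
      Filter.atTop (nhds 0) := by
  have hBmeas : MeasurableSet (unitBall n) := measurableSet_ball
  set P := perimeter (unitBall n) with hP
  set V := rieszEnergy α (unitBall n) with hV
  set U := potEnergy β A (unitBall n) with hU
  have hPB : P < ⊤ :=
    lt_of_le_of_lt (measure_mono Statement9Aux.essBoundary_unitBall_subset)
      (Statement9Aux.sphere_lt_top hn)
  have hVB : V < ⊤ := Statement9Aux.riesz_unitBall_lt_top hn hα0 hαn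
  have hUB : U < ⊤ := Statement9Aux.pot_unitBall_lt_top hβ hA
  rw [ENNReal.tendsto_nhds_zero]
  intro ε hε
  rcases eq_or_ne ε ⊤ with rfl | hεtop
  · exact Filter.Eventually.of_forall fun γ => le_top
  have hεt : 0 < ε.toReal := ENNReal.toReal_pos hε.ne' hεtop
  set ε₀ := min ε.toReal 1 with hε₀def
  have hε₀pos : 0 < ε₀ := lt_min hεt one_pos
  obtain ⟨c, hc, hstab⟩ := Statement9Aux.stability (n := n) hn hβ hA hε₀pos
  set w : ℝ → ℝ≥0∞ := fun γ =>
    ENNReal.ofReal (γ ^ (-(1+β))) * P + ENNReal.ofReal (γ ^ (α - β)) * V with hw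
  have hwt : Filter.Tendsto w Filter.atTop (nhds 0) := by
    have h1 : Filter.Tendsto (fun γ : ℝ => ENNReal.ofReal (γ ^ (-(1+β))))
        Filter.atTop (nhds 0) := by
      have h0 := tendsto_rpow_neg_atTop (by linarith : (0:ℝ) < 1+β)
      have h2 := (ENNReal.continuous_ofReal.tendsto 0).comp h0
      simpa [Function.comp_def] using h2
    have h1' : Filter.Tendsto (fun γ : ℝ => ENNReal.ofReal (γ ^ (α-β)))
        Filter.atTop (nhds 0) := by
      have h0 := tendsto_rpow_neg_atTop (by linarith : (0:ℝ) < β-α)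
      have h2 := (ENNReal.continuous_ofReal.tendsto 0).comp h0
      have heq : (fun γ:ℝ => ENNReal.ofReal (γ ^ (α-β)))
          = fun γ:ℝ => ENNReal.ofReal (γ ^ (-(β-α))) := by
        funext γ
        ring_nf
      rw [heq]
      simpa [Function.comp_def] using h2
    have hA1 := ENNReal.Tendsto.mul_const h1 (Or.inr hPB.ne)
    have hA2 := ENNReal.Tendsto.mul_const h1' (Or.inr hVB.ne)
    have h3 := hA1.add hA2
    rw [hw]
    simpa only [zero_mul, add_zero] using h3
  have hev := hwt.eventually_lt_const (ENNReal.ofReal_pos.2 hc)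
  filter_upwards [hev, Filter.eventually_ge_atTop (1:ℝ)] with γ hγw hγ1
  have hγ0 : (0:ℝ) < γ := lt_of_lt_of_le one_pos hγ1
  obtain ⟨hmeas, hvol, hmin⟩ := hE γ hγ0
  have key := hmin (unitBall n) hBmeas rfl
  simp only [rescaledEnergy, ← hP, ← hV, ← hU] at key
  set a := ENNReal.ofReal (γ ^ (1+β)) with ha
  have ha0 : a ≠ 0 := (ENNReal.ofReal_pos.2 (Real.rpow_pos_of_pos hγ0 _)).ne'
  have hatop : a ≠ ⊤ := ENNReal.ofReal_ne_top
  have hstep1 : a * potEnergy β A (E γ) ≤ P + ENNReal.ofReal (γ^(1+α)) * V + a * U :=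
    le_trans le_add_self key
  have e1 : a * ENNReal.ofReal (γ ^ (-(1+β))) = 1 := by
    rw [ha, ← ENNReal.ofReal_mul (Real.rpow_nonneg hγ0.le _), ← Real.rpow_add hγ0,
      show (1+β) + (-(1+β)) = 0 by ring, Real.rpow_zero, ENNReal.ofReal_one]
  have e2 : a * ENNReal.ofReal (γ ^ (α-β)) = ENNReal.ofReal (γ^(1+α)) := by
    rw [ha, ← ENNReal.ofReal_mul (Real.rpow_nonneg hγ0.le _), ← Real.rpow_add hγ0,
      show (1+β) + (α-β) = 1+α by ring]
  have hid : a * (U + w γ) = a * U + (P + ENNReal.ofReal (γ^(1+α)) * V) := by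
    rw [hw]
    simp only []
    rw [mul_add, mul_add, ← mul_assoc, ← mul_assoc, e1, e2, one_mul]
  have hUle : potEnergy β A (E γ) ≤ U + w γ := by
    have h := calc a * potEnergy β A (E γ)
        ≤ P + ENNReal.ofReal (γ^(1+α)) * V + a * U := hstep1
      _ = a * (U + w γ) := by rw [hid]; ring
    exact (ENNReal.mul_le_mul_iff_right ha0 hatop).1 h
  have hUlt : potEnergy β A (E γ) < U + ENNReal.ofReal c :=
    lt_of_le_of_lt hUle (ENNReal.add_lt_add_left hUB.ne hγw)
  by_contra hcon
  push_neg at hcon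
  have hge : ENNReal.ofReal ε₀ ≤ volume (symmDiff (E γ) (unitBall n)) := by
    calc ENNReal.ofReal ε₀ ≤ ε := by
          rw [← ENNReal.ofReal_toReal hεtop]
          exact ENNReal.ofReal_le_ofReal (min_le_left _ _)
      _ ≤ volume (symmDiff (E γ) (unitBall n)) := hcon.le
  have hfinal := hstab (E γ) hmeas hvol hge
  rw [← hU] at hfinal
  exact absurd hUlt (not_lt.2 hfinal)
end
end

section
/- Let n ≥ 1 be an integer, β > 0 and A ≥ 0. For every measurable set E ⊆ ℝⁿ with |E| = |B|, one has U_{β,A}(E) − U_{β,A}(B) ≥ (Aβ / (8 P(B))) · |E Δ B|², where P(B) = n|B| is the (n−1)-dimensional Hausdorff measure of the unit sphere ∂B. -/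
open MeasureTheory Metric Filter ENNReal

noncomputable section

private lemma lintegral_linear_incr (a b K : ℝ) (hab : a ≤ b) (hK : 0 ≤ K) :
    ENNReal.ofReal (K * (b - a) ^ 2 / 2)
      ≤ ∫⁻ t in Set.Ioo a b, ENNReal.ofReal (K * (t - a)) := by
  have hcont : Continuous fun t : ℝ => K * (t - a) := by fun_prop
  have hint : IntegrableOn (fun t : ℝ => K * (t - a)) (Set.Ioo a b) :=
    (hcont.integrableOn_Icc).mono_set Set.Ioo_subset_Icc_self
  have hnn : 0 ≤ᵐ[volume.restrict (Set.Ioo a b)] fun t : ℝ => K * (t - a) := by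
    filter_upwards [ae_restrict_mem measurableSet_Ioo] with t ht
    have h1 : 0 ≤ t - a := by linarith [ht.1]
    exact mul_nonneg hK h1
  rw [← MeasureTheory.ofReal_integral_eq_lintegral_ofReal hint hnn]
  apply ENNReal.ofReal_le_ofReal
  have heq : (∫ t in Set.Ioo a b, (K * (t - a))) = K * (b - a) ^ 2 / 2 := by
    rw [← MeasureTheory.integral_Ioc_eq_integral_Ioo, ← intervalIntegral.integral_of_le hab,
      intervalIntegral.integral_const_mul,
      intervalIntegral.integral_sub intervalIntegral.intervalIntegrable_id
        intervalIntegrable_const,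
      integral_id, intervalIntegral.integral_const]
    simp only [smul_eq_mul]
    ring
  exact heq.ge

private lemma lintegral_linear_decr (a b K : ℝ) (hab : a ≤ b) (hK : 0 ≤ K) :
    ENNReal.ofReal (K * (b - a) ^ 2 / 2)
      ≤ ∫⁻ t in Set.Ioo a b, ENNReal.ofReal (K * (b - t)) := by
  have hcont : Continuous fun t : ℝ => K * (b - t) := by fun_prop
  have hint : IntegrableOn (fun t : ℝ => K * (b - t)) (Set.Ioo a b) :=
    (hcont.integrableOn_Icc).mono_set Set.Ioo_subset_Icc_self
  have hnn : 0 ≤ᵐ[volume.restrict (Set.Ioo a b)] fun t : ℝ => K * (b - t) := by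
    filter_upwards [ae_restrict_mem measurableSet_Ioo] with t ht
    have h1 : 0 ≤ b - t := by linarith [ht.2]
    exact mul_nonneg hK h1
  rw [← MeasureTheory.ofReal_integral_eq_lintegral_ofReal hint hnn]
  apply ENNReal.ofReal_le_ofReal
  have heq : (∫ t in Set.Ioo a b, (K * (b - t))) = K * (b - a) ^ 2 / 2 := by
    rw [← MeasureTheory.integral_Ioc_eq_integral_Ioo, ← intervalIntegral.integral_of_le hab,
      intervalIntegral.integral_const_mul,
      intervalIntegral.integral_sub intervalIntegrable_const
        intervalIntegral.intervalIntegrable_id,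
      integral_id, intervalIntegral.integral_const]
    simp only [smul_eq_mul]
    ring
  exact heq.ge

/-- Quantitative stability for the potential energy:
`U_{β,A}(E) − U_{β,A}(B) ≥ (Aβ / (8 P(B))) |E Δ B|²` with `P(B) = n |B|`. -/
theorem statement10 (n : ℕ) (hn : 1 ≤ n) (β A : ℝ) (hβ : 0 < β) (hA : 0 ≤ A)
    (E : Set (EuclideanSpace ℝ (Fin n))) (hE : MeasurableSet E)
    (hvol : volume E = volume (unitBall n)) :
    potEnergy β A (unitBall n)
      + ENNReal.ofReal (A * β / (8 * ((n : ℝ) * (volume (unitBall n)).toReal)))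
        * (volume (symmDiff E (unitBall n))) ^ 2
      ≤ potEnergy β A E := by
  rcases eq_or_lt_of_le hA with hA0 | hApos
  · simp [potEnergy, ← hA0]
  have hn' : (0:ℝ) < n := by exact_mod_cast hn
  set B : Set (EuclideanSpace ℝ (Fin n)) := unitBall n with hBdef
  have hBmeas : MeasurableSet B := measurableSet_ball
  have hBfin : volume B ≠ ⊤ := measure_ball_lt_top.ne
  have hEfin : volume E ≠ ⊤ := by rw [hvol]; exact hBfin
  set mr : ℝ := (volume B).toReal with hmrdef
  have hm : volume B = ENNReal.ofReal mr := (ENNReal.ofReal_toReal hBfin).symm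
  have hm' : volume (Metric.ball (0 : EuclideanSpace ℝ (Fin n)) 1) = ENNReal.ofReal mr := hm
  have hmrpos : 0 < mr :=
    ENNReal.toReal_pos (measure_ball_pos volume (0 : EuclideanSpace ℝ (Fin n)) one_pos).ne' hBfin
  -- δ
  have hδeq : volume (B \ E) = volume (E \ B) := by
    have h1 : volume (E ∩ B) + volume (E \ B) = volume B := by
      rw [← hvol]; exact measure_inter_add_diff E hBmeas
    have h2 : volume (B ∩ E) + volume (B \ E) = volume B := measure_inter_add_diff B hE
    rw [Set.inter_comm] at h2
    have hfinEB : volume (E ∩ B) ≠ ⊤ :=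
      ((measure_mono Set.inter_subset_right).trans_lt hBfin.lt_top).ne
    exact (ENNReal.add_right_inj hfinEB).mp (h2.trans h1.symm)
  have hδfin : volume (E \ B) ≠ ⊤ :=
    ((measure_mono Set.diff_subset).trans_lt hEfin.lt_top).ne
  set δr : ℝ := (volume (E \ B)).toReal with hδrdef
  have hδ : volume (E \ B) = ENNReal.ofReal δr := (ENNReal.ofReal_toReal hδfin).symm
  have hδr0 : 0 ≤ δr := ENNReal.toReal_nonneg
  have hδr_le : δr ≤ mr := by
    have h : volume (B \ E) ≤ volume B := measure_mono Set.diff_subset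
    rw [hδeq] at h
    exact ENNReal.toReal_mono hBfin h
  set K : ℝ := n * mr / (β * A) with hKdef
  have hKpos : 0 < K := div_pos (mul_pos hn' hmrpos) (mul_pos hβ hApos)
  set hl : ℝ := δr / K with hldef
  have hl0 : 0 ≤ hl := div_nonneg hδr0 hKpos.le
  have hKhl : K * hl = δr := by
    rw [hldef, mul_comm, div_mul_cancel₀ _ hKpos.ne']
  -- symm diff
  have hD : volume (symmDiff E B) = ENNReal.ofReal (2 * δr) := by
    rw [Set.symmDiff_def,
      measure_union disjoint_sdiff_sdiff (hBmeas.diff hE), hδeq, hδ,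
      ← ENNReal.ofReal_add hδr0 hδr0, two_mul]
  have hconst : ENNReal.ofReal (A * β / (8 * ((n : ℝ) * mr))) * (volume (symmDiff E B)) ^ 2
      = ENNReal.ofReal (K * hl ^ 2 / 2) := by
    rw [hD, ← ENNReal.ofReal_pow (by positivity), ← ENNReal.ofReal_mul (by positivity)]
    congr 1
    rw [hldef, hKdef]
    field_simp
    ring
  -- layer cake
  set U : ℝ → Set (EuclideanSpace ℝ (Fin n)) := fun t => {x | t < A * ‖x‖ ^ β} with hUdef
  have hfc : Continuous fun x : EuclideanSpace ℝ (Fin n) => A * ‖x‖ ^ β :=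
    continuous_const.mul (continuous_norm.rpow_const fun x => Or.inr hβ.le)
  have hUmeas : ∀ t : ℝ, MeasurableSet {x : EuclideanSpace ℝ (Fin n) | t < A * ‖x‖ ^ β} :=
    fun t => measurableSet_lt measurable_const hfc.measurable
  have hpot : ∀ S : Set (EuclideanSpace ℝ (Fin n)), MeasurableSet S →
      potEnergy β A S = ∫⁻ t in Set.Ioi (0:ℝ), volume (S ∩ U t) := by
    intro S hS
    have hlc := lintegral_eq_lintegral_meas_lt (volume.restrict S)
      (f := fun x : EuclideanSpace ℝ (Fin n) => A * ‖x‖ ^ β)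
      (ae_of_all _ fun x => mul_nonneg hApos.le (Real.rpow_nonneg (norm_nonneg x) β))
      hfc.measurable.aemeasurable
    exact hlc.trans (lintegral_congr fun t => by
      simp only [hUdef]
      rw [Measure.restrict_apply (hUmeas t), Set.inter_comm])
  have hUc : ∀ t : ℝ, 0 < t →
      U t = (closedBall (0 : EuclideanSpace ℝ (Fin n)) ((t / A) ^ (β⁻¹ : ℝ)))ᶜ := by
    intro t ht
    simp only [hUdef]
    ext x
    simp only [Set.mem_setOf_eq, Set.mem_compl_iff, mem_closedBall_zero_iff, not_le]
    rw [Real.rpow_inv_lt_iff_of_pos (div_nonneg ht.le hApos.le) (norm_nonneg x) hβ,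
      div_lt_iff₀ hApos, mul_comm]
  have hCvol : ∀ s : ℝ, 0 ≤ s →
      volume (closedBall (0 : EuclideanSpace ℝ (Fin n)) s) = ENNReal.ofReal (s ^ n * mr) := by
    intro s hs
    rw [MeasureTheory.Measure.addHaar_closedBall volume (0 : EuclideanSpace ℝ (Fin n)) hs]
    simp only [finrank_euclideanSpace_fin]
    rw [hm', ← ENNReal.ofReal_mul (pow_nonneg hs n)]
  have hBsubC : ∀ t : ℝ, A ≤ t →
      B ⊆ closedBall (0 : EuclideanSpace ℝ (Fin n)) ((t / A) ^ (β⁻¹ : ℝ)) := by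
    intro t hAt
    have h1 : (1:ℝ) ≤ (t / A) ^ (β⁻¹ : ℝ) :=
      Real.one_le_rpow ((one_le_div hApos).2 hAt) (by positivity)
    exact ball_subset_closedBall.trans (closedBall_subset_closedBall h1)
  have hBU0 : ∀ t : ℝ, A ≤ t → volume (B ∩ U t) = 0 := by
    intro t hAt
    have ht0 : 0 < t := lt_of_lt_of_le hApos hAt
    rw [hUc t ht0, ← Set.diff_eq, Set.diff_eq_empty.mpr (hBsubC t hAt), measure_empty]
  -- claim 0 : monotone comparison at every level
  have claim0 : ∀ t : ℝ, t ∈ Set.Ioi (0:ℝ) → volume (B ∩ U t) ≤ volume (E ∩ U t) := by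
    intro t ht
    rcases le_or_gt A t with hAt | htA
    · rw [hBU0 t hAt]; exact zero_le
    · have ht0 : 0 < t := ht
      have hslt : (t / A) ^ (β⁻¹ : ℝ) < 1 :=
        Real.rpow_lt_one (div_nonneg ht0.le hApos.le) ((div_lt_one hApos).2 htA) (by positivity)
      rw [hUc t ht0, ← Set.diff_eq, ← Set.diff_eq]
      set C := closedBall (0 : EuclideanSpace ℝ (Fin n)) ((t / A) ^ (β⁻¹ : ℝ)) with hCdef
      have hCsub : C ⊆ B := closedBall_subset_ball hslt
      have h1 : volume (E ∩ C) + volume (E \ C) = volume B := by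
        rw [← hvol]; exact measure_inter_add_diff E measurableSet_closedBall
      have h2 : volume (B ∩ C) + volume (B \ C) = volume B :=
        measure_inter_add_diff B measurableSet_closedBall
      rw [Set.inter_eq_self_of_subset_right hCsub] at h2
      have h3 : volume (E ∩ C) ≤ volume C := measure_mono Set.inter_subset_right
      have hfin1 : volume (E ∩ C) ≠ ⊤ :=
        ((measure_mono Set.inter_subset_right).trans_lt measure_closedBall_lt_top).ne
      have h4 : volume (E ∩ C) + volume (B \ C) ≤ volume (E ∩ C) + volume (E \ C) := by
        rw [h1, ← h2]
        exact add_le_add h3 le_rfl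
      exact (ENNReal.add_le_add_iff_left hfin1).mp h4
  -- the key lower bound on an interval
  have key : ∃ (aa : ℝ) (G : ℝ → ℝ≥0∞), 0 ≤ aa ∧ Measurable G ∧
      (∀ t ∈ Set.Ioo aa (aa + hl), volume (B ∩ U t) + G t ≤ volume (E ∩ U t)) ∧
      ENNReal.ofReal (K * hl ^ 2 / 2) ≤ ∫⁻ t in Set.Ioo aa (aa + hl), G t := by
    rcases le_total β (n:ℝ) with hβn | hnβ
    · -- inner branch : β ≤ n
      have hhlA : hl ≤ A := by
        rw [hldef, div_le_iff₀ hKpos]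
        have h : A * K = n * mr / β := by rw [hKdef]; field_simp
        rw [h, le_div_iff₀ hβ]
        nlinarith [hδr_le, hmrpos]
      refine ⟨A - hl, fun t => ENNReal.ofReal (K * (t - (A - hl))), by linarith, ?_, ?_, ?_⟩
      · exact ((by fun_prop : Continuous fun t : ℝ => K * (t - (A - hl))).measurable).ennreal_ofReal
      · intro t ht
        have ht2 : t < A := by have := ht.2; linarith
        have ht1 : A - hl < t := ht.1
        have ht0 : 0 < t := lt_of_le_of_lt (by linarith : (0:ℝ) ≤ A - hl) ht1
        have hx0 : (0:ℝ) ≤ t / A := div_nonneg ht0.le hApos.le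
        have hslt : (t / A) ^ (β⁻¹ : ℝ) < 1 :=
          Real.rpow_lt_one hx0 ((div_lt_one hApos).2 ht2) (by positivity)
        have hs0 : 0 ≤ (t / A) ^ (β⁻¹ : ℝ) := Real.rpow_nonneg hx0 _
        rw [hUc t ht0, ← Set.diff_eq, ← Set.diff_eq]
        set s : ℝ := (t / A) ^ (β⁻¹ : ℝ) with hsdef
        set C := closedBall (0 : EuclideanSpace ℝ (Fin n)) s with hCdef
        have hCsub : C ⊆ B := closedBall_subset_ball hslt
        have hCfin : volume C ≠ ⊤ := measure_closedBall_lt_top.ne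
        have hfin1 : volume (E ∩ C) ≠ ⊤ :=
          ((measure_mono Set.inter_subset_right).trans_lt hCfin.lt_top).ne
        have hfin2 : volume (E \ C) ≠ ⊤ :=
          ((measure_mono Set.diff_subset).trans_lt hEfin.lt_top).ne
        have hfin3 : volume (C \ E) ≠ ⊤ :=
          ((measure_mono Set.diff_subset).trans_lt hCfin.lt_top).ne
        have hfin4 : volume (B \ C) ≠ ⊤ :=
          ((measure_mono Set.diff_subset).trans_lt hBfin.lt_top).ne
        have i1 : (volume (E ∩ C)).toReal + (volume (E \ C)).toReal = mr := by
          have h := measure_inter_add_diff (μ := volume) E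
            (measurableSet_closedBall (x := (0 : EuclideanSpace ℝ (Fin n))) (ε := s))
          rw [hvol] at h
          rw [← ENNReal.toReal_add hfin1 hfin2, h]
        have i2 : (volume (E ∩ C)).toReal + (volume (C \ E)).toReal = s ^ n * mr := by
          have h := measure_inter_add_diff (μ := volume) C hE
          rw [Set.inter_comm] at h
          rw [← ENNReal.toReal_add hfin1 hfin3, h, hCvol s hs0,
            ENNReal.toReal_ofReal (by positivity)]
        have i4 : s ^ n * mr + (volume (B \ C)).toReal = mr := by
          have h2 : volume (B ∩ C) + volume (B \ C) = volume B :=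
            measure_inter_add_diff B measurableSet_closedBall
          rw [Set.inter_eq_self_of_subset_right hCsub, hCvol s hs0] at h2
          have h3 := congrArg ENNReal.toReal h2
          rw [ENNReal.toReal_add ENNReal.ofReal_ne_top hfin4,
            ENNReal.toReal_ofReal (by positivity)] at h3
          exact h3
        have i3 : δr ≤ (volume (C \ E)).toReal + (volume (B \ C)).toReal := by
          have hsub : B \ E ⊆ (C \ E) ∪ (B \ C) := by
            intro x hx
            by_cases hxC : x ∈ C
            · exact Or.inl ⟨hxC, hx.2⟩
            · exact Or.inr ⟨hx.1, hxC⟩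
          have hle : volume (B \ E) ≤ volume (C \ E) + volume (B \ C) :=
            (measure_mono hsub).trans (measure_union_le _ _)
          rw [hδeq] at hle
          have := ENNReal.toReal_mono (ENNReal.add_ne_top.2 ⟨hfin3, hfin4⟩) hle
          rwa [ENNReal.toReal_add hfin3 hfin4] at this
        -- Bernoulli
        have hsn : s ^ n = (t / A) ^ ((β⁻¹ : ℝ) * n) := by
          rw [hsdef, ← Real.rpow_natCast ((t / A) ^ (β⁻¹ : ℝ)) n, ← Real.rpow_mul hx0]
        have hγ1 : 1 ≤ (β⁻¹ : ℝ) * n := by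
          rw [mul_comm, ← div_eq_mul_inv]
          exact (one_le_div hβ).2 hβn
        have hb1 : 1 + ((β⁻¹ : ℝ) * n) * (t / A - 1) ≤ (t / A) ^ ((β⁻¹ : ℝ) * n) := by
          have h := one_add_mul_self_le_rpow_one_add
            (by linarith : (-1:ℝ) ≤ t / A - 1) hγ1
          have he : (1:ℝ) + (t / A - 1) = t / A := by ring
          rwa [he] at h
        have heqK : mr * (((β⁻¹ : ℝ) * n) * (1 - t / A)) = K * (A - t) := by
          rw [hKdef]; field_simp
        have hbern : mr - s ^ n * mr ≤ K * (A - t) := by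
          rw [hsn, ← heqK]
          have hb2 := mul_le_mul_of_nonneg_left hb1 hmrpos.le
          linarith [hb2]
        -- conclude
        rw [← ENNReal.ofReal_toReal hfin4,
          ← ENNReal.ofReal_add ENNReal.toReal_nonneg
            (mul_nonneg hKpos.le (by linarith : (0:ℝ) ≤ t - (A - hl)))]
        refine ENNReal.ofReal_le_of_le_toReal ?_
        have hKt : K * (t - (A - hl)) = K * (t - A) + δr := by
          have h : K * (t - (A - hl)) = K * (t - A) + K * hl := by ring
          rw [h, hKhl]
        rw [hKt]
        linarith [i1, i2, i3, i4, hbern]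
      · have h := lintegral_linear_incr (A - hl) (A - hl + hl) K (by linarith) hKpos.le
        have he : A - hl + hl - (A - hl) = hl := by ring
        rwa [he] at h
    · -- outer branch : n ≤ β
      refine ⟨A, fun t => ENNReal.ofReal (K * (A + hl - t)), hApos.le, ?_, ?_, ?_⟩
      · exact ((by fun_prop : Continuous fun t : ℝ => K * (A + hl - t)).measurable).ennreal_ofReal
      · intro t ht
        have ht1 : A < t := ht.1
        have ht0 : 0 < t := hApos.trans ht1
        have hx0 : (0:ℝ) ≤ t / A := div_nonneg ht0.le hApos.le
        have hs0 : 0 ≤ (t / A) ^ (β⁻¹ : ℝ) := Real.rpow_nonneg hx0 _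
        rw [hBU0 t ht1.le, zero_add, hUc t ht0, ← Set.diff_eq]
        set s : ℝ := (t / A) ^ (β⁻¹ : ℝ) with hsdef
        set C := closedBall (0 : EuclideanSpace ℝ (Fin n)) s with hCdef
        have hBC : B ⊆ C := hBsubC t ht1.le
        have hCfin : volume C ≠ ⊤ := measure_closedBall_lt_top.ne
        have hfin2 : volume (E \ C) ≠ ⊤ :=
          ((measure_mono Set.diff_subset).trans_lt hEfin.lt_top).ne
        have hfin5 : volume (C \ B) ≠ ⊤ :=
          ((measure_mono Set.diff_subset).trans_lt hCfin.lt_top).ne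
        have i4 : mr + (volume (C \ B)).toReal = s ^ n * mr := by
          have h2 : volume (C ∩ B) + volume (C \ B) = volume C :=
            measure_inter_add_diff C hBmeas
          rw [Set.inter_eq_self_of_subset_right hBC, hCvol s hs0] at h2
          have h3 := congrArg ENNReal.toReal h2
          rw [ENNReal.toReal_add hBfin hfin5, ENNReal.toReal_ofReal (by positivity)] at h3
          exact h3
        have i3 : δr ≤ (volume (E \ C)).toReal + (volume (C \ B)).toReal := by
          have hsub : E \ B ⊆ (E \ C) ∪ (C \ B) := by
            intro x hx
            by_cases hxC : x ∈ C
            · exact Or.inr ⟨hxC, hx.2⟩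
            · exact Or.inl ⟨hx.1, hxC⟩
          have hle : volume (E \ B) ≤ volume (E \ C) + volume (C \ B) :=
            (measure_mono hsub).trans (measure_union_le _ _)
          have := ENNReal.toReal_mono (ENNReal.add_ne_top.2 ⟨hfin2, hfin5⟩) hle
          rwa [ENNReal.toReal_add hfin2 hfin5] at this
        -- Bernoulli (concave case)
        have hsn : s ^ n = (t / A) ^ ((β⁻¹ : ℝ) * n) := by
          rw [hsdef, ← Real.rpow_natCast ((t / A) ^ (β⁻¹ : ℝ)) n, ← Real.rpow_mul hx0]
        have hγ1 : (β⁻¹ : ℝ) * n ≤ 1 := by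
          rw [mul_comm, ← div_eq_mul_inv]
          exact (div_le_one hβ).2 hnβ
        have hb1 : (t / A) ^ ((β⁻¹ : ℝ) * n) ≤ 1 + ((β⁻¹ : ℝ) * n) * (t / A - 1) := by
          have h := rpow_one_add_le_one_add_mul_self
            (by linarith : (-1:ℝ) ≤ t / A - 1) (by positivity) hγ1
          have he : (1:ℝ) + (t / A - 1) = t / A := by ring
          rwa [he] at h
        have heqK : mr * (((β⁻¹ : ℝ) * n) * (t / A - 1)) = K * (t - A) := by
          rw [hKdef]; field_simp
        have hbern : s ^ n * mr - mr ≤ K * (t - A) := by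
          rw [hsn, ← heqK]
          have hb2 := mul_le_mul_of_nonneg_left hb1 hmrpos.le
          linarith [hb2]
        refine ENNReal.ofReal_le_of_le_toReal ?_
        have hKt : K * (A + hl - t) = δr - K * (t - A) := by
          have h : K * (A + hl - t) = K * hl - K * (t - A) := by ring
          rw [h, hKhl]
        rw [hKt]
        linarith [i3, i4, hbern]
      · have h := lintegral_linear_decr A (A + hl) K (by linarith) hKpos.le
        have he : A + hl - A = hl := by ring
        rwa [he] at h
  -- assembly
  obtain ⟨aa, G, haa0, hGmeas, hclaim, hGint⟩ := key
  have hIoosub : Set.Ioo aa (aa + hl) ⊆ Set.Ioi (0:ℝ) :=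
    fun t ht => lt_of_le_of_lt haa0 ht.1
  calc potEnergy β A B
        + ENNReal.ofReal (A * β / (8 * ((n : ℝ) * mr))) * (volume (symmDiff E B)) ^ 2
      = potEnergy β A B + ENNReal.ofReal (K * hl ^ 2 / 2) := by rw [hconst]
    _ ≤ potEnergy β A B + ∫⁻ t in Set.Ioo aa (aa + hl), G t := add_le_add le_rfl hGint
    _ = (∫⁻ t in Set.Ioi (0:ℝ), volume (B ∩ U t))
        + ∫⁻ t in Set.Ioi (0:ℝ), (Set.Ioo aa (aa + hl)).indicator G t := by
        rw [hpot B hBmeas]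
        congr 1
        rw [lintegral_indicator measurableSet_Ioo]
        rw [Measure.restrict_restrict measurableSet_Ioo,
          Set.inter_eq_self_of_subset_left hIoosub]
    _ = ∫⁻ t in Set.Ioi (0:ℝ),
          (volume (B ∩ U t) + (Set.Ioo aa (aa + hl)).indicator G t) :=
        (lintegral_add_right _ (hGmeas.indicator measurableSet_Ioo)).symm
    _ ≤ ∫⁻ t in Set.Ioi (0:ℝ), volume (E ∩ U t) := by
        refine lintegral_mono_ae ?_
        filter_upwards [ae_restrict_mem measurableSet_Ioi] with t ht
        by_cases htI : t ∈ Set.Ioo aa (aa + hl)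
        · rw [Set.indicator_of_mem htI]
          exact hclaim t htI
        · rw [Set.indicator_of_notMem htI, add_zero]
          exact claim0 t ht
    _ = potEnergy β A E := (hpot E hE).symm
end
end

section
/- Let n ≥ 1 be an integer. Let S ⊆ (1/2, ∞) be a measurable set with ∫_S r^{n−1} dr < ∞, and let u > 1/2 be such that ∫_S r^{n−1} dr = ∫_{1/2}^{u} r^{n−1} dr. Then there exists a measurable map T : (1/2, u) → (1/2, ∞) such that the pushforward under T of the measure 1_{(1/2,u)}(r) r^{n−1} dr equals the measure 1_S(r) r^{n−1} dr, and moreover T(r) ≥ r for every r ∈ (1/2, u). -/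
open MeasureTheory Filter ENNReal

noncomputable section

private lemma aux_Iic_iInter (b : ℝ) : Set.Iic b = ⋂ n : ℕ, Set.Iic (b + 1 / (n + 1)) := by
  ext x
  simp only [Set.mem_iInter, Set.mem_Iic]
  constructor
  · intro h n
    have : (0 : ℝ) < 1 / (n + 1) := by positivity
    linarith
  · intro h
    by_contra hx
    push_neg at hx
    obtain ⟨n, hn⟩ := exists_nat_one_div_lt (sub_pos.2 hx)
    have := h n
    linarith

private lemma aux_antitone {m k : ℕ} (hmk : m ≤ k) : (1 : ℝ) / (k + 1) ≤ 1 / (m + 1) := by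
  apply one_div_le_one_div_of_le (by positivity)
  have : (m : ℝ) ≤ k := Nat.cast_le.2 hmk
  linarith

private lemma aux_right (κ : Measure ℝ) (hκ : κ Set.univ ≠ ⊤) (b : ℝ) :
    κ (Set.Iic b) = ⨅ n : ℕ, κ (Set.Iic (b + 1 / (n + 1))) := by
  rw [aux_Iic_iInter b]
  refine Antitone.measure_iInter ?_ (fun n => measurableSet_Iic.nullMeasurableSet) ⟨0, ?_⟩
  · intro m k hmk
    apply Set.Iic_subset_Iic.2
    have := aux_antitone hmk
    linarith
  · exact ne_top_of_le_ne_top hκ (measure_mono (Set.subset_univ _))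

private lemma aux_Iio_iUnion (b : ℝ) : Set.Iio b = ⋃ n : ℕ, Set.Iic (b - 1 / (n + 1)) := by
  ext x
  simp only [Set.mem_iUnion, Set.mem_Iic, Set.mem_Iio]
  constructor
  · intro h
    obtain ⟨n, hn⟩ := exists_nat_one_div_lt (sub_pos.2 h)
    exact ⟨n, by linarith⟩
  · rintro ⟨n, hn⟩
    have : (0 : ℝ) < 1 / (n + 1) := by positivity
    linarith

private lemma aux_left (κ : Measure ℝ) (b : ℝ) :
    κ (Set.Iio b) = ⨆ n : ℕ, κ (Set.Iic (b - 1 / (n + 1))) := by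
  rw [aux_Iio_iUnion b]
  apply Monotone.measure_iUnion
  intro m k hmk
  apply Set.Iic_subset_Iic.2
  have := aux_antitone hmk
  linarith

private lemma aux_sup (κ : Measure ℝ) : κ Set.univ = ⨆ n : ℕ, κ (Set.Iic (n : ℝ)) := by
  have : (Set.univ : Set ℝ) = ⋃ n : ℕ, Set.Iic (n : ℝ) := by
    ext x
    simp only [Set.mem_univ, Set.mem_iUnion, Set.mem_Iic, true_iff]
    exact exists_nat_ge x
  rw [this]
  exact Monotone.measure_iUnion fun m k h => Set.Iic_subset_Iic.2 (Nat.cast_le.2 h)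

set_option maxHeartbeats 2000000 in
/-- Existence of a monotone-above transport map on the half-line: the measure
`1_{(1/2,u)}(r) r^(n-1) dr` can be pushed forward to `1_S(r) r^(n-1) dr` by a map `T`
with `T r ≥ r`. -/
theorem statement13 (n : ℕ) (hn : 1 ≤ n) (S : Set ℝ) (hS : MeasurableSet S)
    (hS' : S ⊆ Set.Ioi (1 / 2 : ℝ))
    (hfin : (∫⁻ r in S, ENNReal.ofReal (r ^ (n - 1))) < ⊤)
    (u : ℝ) (hu : (1 / 2 : ℝ) < u)
    (heq : (∫⁻ r in S, ENNReal.ofReal (r ^ (n - 1)))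
      = ∫⁻ r in Set.Ioo (1 / 2 : ℝ) u, ENNReal.ofReal (r ^ (n - 1))) :
    ∃ T : ℝ → ℝ, Measurable T ∧
      (∀ r ∈ Set.Ioo (1 / 2 : ℝ) u, T r ∈ Set.Ioi (1 / 2 : ℝ) ∧ r ≤ T r) ∧
      Measure.map T
          ((volume.restrict (Set.Ioo (1 / 2 : ℝ) u)).withDensity
            fun r => ENNReal.ofReal (r ^ (n - 1)))
        = (volume.restrict S).withDensity fun r => ENNReal.ofReal (r ^ (n - 1)) := by
  classical
  set ρ : ℝ → ℝ≥0∞ := fun r => ENNReal.ofReal (r ^ (n - 1)) with hρdef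
  have hρm : Measurable ρ := (measurable_id.pow_const _).ennreal_ofReal
  set ω : Measure ℝ := volume.withDensity ρ with hωdef
  have hIoo : MeasurableSet (Set.Ioo (1 / 2 : ℝ) u) := measurableSet_Ioo
  have hμω : (volume.restrict (Set.Ioo (1 / 2 : ℝ) u)).withDensity ρ
      = ω.restrict (Set.Ioo (1 / 2 : ℝ) u) := (restrict_withDensity hIoo ρ).symm
  have hνω : (volume.restrict S).withDensity ρ = ω.restrict S := (restrict_withDensity hS ρ).symm
  set f : ℝ → ℝ≥0∞ := fun r => ω (Set.Iic r ∩ Set.Ioo (1 / 2 : ℝ) u) with hfdef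
  set g : ℝ → ℝ≥0∞ := fun t => ω (Set.Iic t ∩ S) with hgdef
  set M : ℝ≥0∞ := ω (Set.Ioo (1 / 2 : ℝ) u) with hMdef
  have hωS : ω S = ∫⁻ r in S, ENNReal.ofReal (r ^ (n - 1)) := withDensity_apply ρ hS
  have hωIoo : M = ∫⁻ r in Set.Ioo (1 / 2 : ℝ) u, ENNReal.ofReal (r ^ (n - 1)) :=
    withDensity_apply ρ hIoo
  have hMS : M = ω S := by rw [hωS, hωIoo, heq]
  have hMne : M ≠ ⊤ := by
    rw [hMS, hωS]
    exact hfin.ne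
  -- basic facts about f and g
  have hfM : ∀ r, f r ≤ M := fun r => measure_mono Set.inter_subset_right
  have hgM : ∀ t, g t ≤ M := fun t => by
    rw [hMS]; exact measure_mono Set.inter_subset_right
  have hfne : ∀ r, f r ≠ ⊤ := fun r => ne_top_of_le_ne_top hMne (hfM r)
  have hfmono : Monotone f := fun a b hab =>
    measure_mono (Set.inter_subset_inter_left _ (Set.Iic_subset_Iic.2 hab))
  have hgmono : Monotone g := fun a b hab =>
    measure_mono (Set.inter_subset_inter_left _ (Set.Iic_subset_Iic.2 hab))
  -- positivity of ω on intervals in (0, ∞)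
  have hpos : ∀ t r : ℝ, (1 : ℝ) / 2 ≤ t → t < r → 0 < ω (Set.Ioo t r) := by
    intro t r ht htr
    rw [hωdef, withDensity_apply _ measurableSet_Ioo]
    rw [pos_iff_ne_zero]
    intro h0
    have hae : ρ =ᵐ[volume.restrict (Set.Ioo t r)] 0 := (lintegral_eq_zero_iff hρm).mp h0
    rw [Filter.EventuallyEq, ae_iff] at hae
    simp only [Pi.zero_apply] at hae
    have hmeas : MeasurableSet {x : ℝ | ¬ ρ x = 0} :=
      (hρm (measurableSet_singleton 0)).compl
    rw [Measure.restrict_apply hmeas] at hae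
    have hsub : Set.Ioo t r ⊆ {x : ℝ | ¬ ρ x = 0} := by
      intro x hx
      simp only [Set.mem_setOf_eq, hρdef]
      have hx0 : (0 : ℝ) < x := lt_of_lt_of_le (by norm_num) (le_trans ht hx.1.le)
      have : (0 : ℝ) < x ^ (n - 1) := pow_pos hx0 _
      simp [ENNReal.ofReal_eq_zero, not_le, this]
    have hm2 : volume (Set.Ioo t r) ≤ volume ({x : ℝ | ¬ ρ x = 0} ∩ Set.Ioo t r) :=
      measure_mono (Set.subset_inter hsub fun x hx => hx)
    rw [hae] at hm2
    have hvol : volume (Set.Ioo t r) = 0 := le_antisymm hm2 (zero_le)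
    rw [Real.volume_Ioo] at hvol
    exact (ENNReal.ofReal_pos.2 (by linarith)).ne' hvol
  have hMpos : 0 < M := hpos _ _ le_rfl hu
  -- f vanishes below 1/2, g vanishes below 1/2
  have hf0 : ∀ r : ℝ, r ≤ 1 / 2 → f r = 0 := by
    intro r hr
    have : Set.Iic r ∩ Set.Ioo (1 / 2 : ℝ) u = ∅ := by
      ext x
      simp only [Set.mem_inter_iff, Set.mem_Iic, Set.mem_Ioo, Set.mem_empty_iff_false, iff_false]
      rintro ⟨h1, h2, h3⟩
      linarith
    rw [hfdef]
    simp only [this, measure_empty]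
  have hg0 : ∀ t : ℝ, t ≤ 1 / 2 → g t = 0 := by
    intro t ht
    have : Set.Iic t ∩ S = ∅ := by
      ext x
      simp only [Set.mem_inter_iff, Set.mem_Iic, Set.mem_empty_iff_false, iff_false]
      rintro ⟨h1, h2⟩
      have := hS' h2
      simp only [Set.mem_Ioi] at this
      linarith
    rw [hgdef]
    simp only [this, measure_empty]
  -- g ≤ f below u
  have hgf : ∀ t : ℝ, t < u → g t ≤ f t := by
    intro t ht
    apply measure_mono
    rintro x ⟨hx1, hx2⟩
    have := hS' hx2
    simp only [Set.mem_Iic] at hx1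
    simp only [Set.mem_Ioi] at this
    exact ⟨hx1, this, lt_of_le_of_lt hx1 ht⟩
  -- strict monotonicity of f on [1/2, u]
  have hfstrict : ∀ t r : ℝ, 1 / 2 ≤ t → t < r → r ≤ u → f t < f r := by
    intro t r ht htr hru
    have hsub1 : (Set.Iic t ∩ Set.Ioo (1 / 2 : ℝ) u) ∪ Set.Ioo t r
        ⊆ Set.Iic r ∩ Set.Ioo (1 / 2 : ℝ) u := by
      rintro x (⟨hx1, hx2⟩ | hx)
      · exact ⟨le_trans hx1 htr.le, hx2⟩
      · exact ⟨hx.2.le, lt_of_le_of_lt ht hx.1, lt_of_lt_of_le hx.2 hru⟩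
    have hdisj : Disjoint (Set.Iic t ∩ Set.Ioo (1 / 2 : ℝ) u) (Set.Ioo t r) := by
      rw [Set.disjoint_left]
      rintro x ⟨hx1, _⟩ hx2
      exact absurd hx1 (not_le.2 hx2.1)
    have hcalc : f t + ω (Set.Ioo t r) ≤ f r := by
      rw [hfdef]
      calc ω (Set.Iic t ∩ Set.Ioo (1 / 2 : ℝ) u) + ω (Set.Ioo t r)
          = ω ((Set.Iic t ∩ Set.Ioo (1 / 2 : ℝ) u) ∪ Set.Ioo t r) :=
            (measure_union hdisj measurableSet_Ioo).symm
        _ ≤ ω (Set.Iic r ∩ Set.Ioo (1 / 2 : ℝ) u) := measure_mono hsub1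
    calc f t < f t + ω (Set.Ioo t r) :=
          ENNReal.lt_add_right (hfne t) (hpos t r ht htr).ne'
      _ ≤ f r := hcalc
  have hfposIoo : ∀ r : ℝ, 1 / 2 < r → r < u → 0 < f r := by
    intro r h1 h2
    have := hfstrict (1 / 2) r le_rfl h1 h2.le
    rwa [hf0 (1 / 2) le_rfl] at this
  have hfu : ∀ r : ℝ, u ≤ r → f r = M := by
    intro r hr
    have hseteq : Set.Iic r ∩ Set.Ioo (1 / 2 : ℝ) u = Set.Ioo (1 / 2 : ℝ) u :=
      Set.inter_eq_self_of_subset_right fun x hx => le_trans hx.2.le hr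
    show ω (Set.Iic r ∩ Set.Ioo (1 / 2 : ℝ) u) = M
    rw [hseteq]
  have hfltM : ∀ r : ℝ, r < u → f r < M := by
    intro r hr
    rcases le_or_gt r (1 / 2) with h | h
    · rw [hf0 r h]; exact hMpos
    · rw [← hfu u le_rfl]
      exact hfstrict r u h.le hr le_rfl
  -- restrictions are finite measures
  have hresIoo : (ω.restrict (Set.Ioo (1 / 2 : ℝ) u)) Set.univ = M := by
    rw [Measure.restrict_apply MeasurableSet.univ, Set.univ_inter]
  have hresS : (ω.restrict S) Set.univ = M := by
    rw [Measure.restrict_apply MeasurableSet.univ, Set.univ_inter, hMS]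
  have hfIic : ∀ r : ℝ, (ω.restrict (Set.Ioo (1 / 2 : ℝ) u)) (Set.Iic r) = f r := fun r =>
    Measure.restrict_apply measurableSet_Iic
  have hgIic : ∀ t : ℝ, (ω.restrict S) (Set.Iic t) = g t := fun t =>
    Measure.restrict_apply measurableSet_Iic
  -- there exist points where g exceeds any value below M
  have hgsup : ∀ c : ℝ≥0∞, c < M → ∃ t : ℝ, c < g t := by
    intro c hc
    have : M = ⨆ m : ℕ, g (m : ℝ) := by
      rw [← hresS, aux_sup (ω.restrict S)]
      exact iSup_congr fun m => hgIic (m : ℝ)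
    rw [this] at hc
    obtain ⟨m, hm⟩ := lt_iSup_iff.mp hc
    exact ⟨(m : ℝ), hm⟩
  -- right continuity of g
  have hg_rc : ∀ (a : ℝ) (c : ℝ≥0∞), (∀ t, a < t → c ≤ g t) → c ≤ g a := by
    intro a c h
    have hga : g a = ⨅ m : ℕ, g (a + 1 / (m + 1)) := by
      rw [← hgIic, aux_right (ω.restrict S) (by rw [hresS]; exact hMne) a]
      exact iInf_congr fun m => hgIic _
    rw [hga]
    exact le_iInf fun m => h _ (lt_add_of_pos_right a (by positivity))
  -- right continuity of f
  have hf_rc : ∀ (b : ℝ) (c : ℝ≥0∞), (∀ t, b < t → c ≤ f t) → c ≤ f b := by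
    intro b c h
    have hfb : f b = ⨅ m : ℕ, f (b + 1 / (m + 1)) := by
      rw [← hfIic, aux_right (ω.restrict (Set.Ioo (1 / 2 : ℝ) u)) (by rw [hresIoo]; exact hMne) b]
      exact iInf_congr fun m => hfIic _
    rw [hfb]
    exact le_iInf fun m => h _ (lt_add_of_pos_right b (by positivity))
  -- left continuity of f (uses atomlessness)
  have hf_lc : ∀ (b : ℝ) (c : ℝ≥0∞), (∀ t, t < b → f t ≤ c) → f b ≤ c := by
    intro b c h
    have hsingle : ω {b} = 0 := by
      rw [hωdef, withDensity_apply _ (measurableSet_singleton b)]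
      exact setLIntegral_measure_zero _ _ (by simp)
    have hsplit : f b ≤ (ω.restrict (Set.Ioo (1 / 2 : ℝ) u)) (Set.Iio b) := by
      rw [← hfIic]
      have : Set.Iic b ⊆ Set.Iio b ∪ {b} := by
        intro x hx
        rcases lt_or_eq_of_le (Set.mem_Iic.mp hx) with h' | h'
        · exact Or.inl h'
        · exact Or.inr (by simp [h'])
      calc (ω.restrict (Set.Ioo (1 / 2 : ℝ) u)) (Set.Iic b)
          ≤ (ω.restrict (Set.Ioo (1 / 2 : ℝ) u)) (Set.Iio b)
            + (ω.restrict (Set.Ioo (1 / 2 : ℝ) u)) {b} :=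
            le_trans (measure_mono this) (measure_union_le _ _)
        _ = (ω.restrict (Set.Ioo (1 / 2 : ℝ) u)) (Set.Iio b) := by
            have : (ω.restrict (Set.Ioo (1 / 2 : ℝ) u)) {b} = 0 := by
              rw [Measure.restrict_apply (measurableSet_singleton b)]
              exact measure_mono_null Set.inter_subset_left hsingle
            rw [this, add_zero]
    refine le_trans hsplit ?_
    rw [aux_left (ω.restrict (Set.Ioo (1 / 2 : ℝ) u)) b]
    refine iSup_le fun m => ?_
    rw [hfIic]
    exact h _ (sub_lt_self b (by positivity))
  -- definition of the transport map
  set A : ℝ → Set ℝ := fun r => {t | f r ≤ g t} with hAdef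
  set T0 : ℝ → ℝ := fun r => sInf (A r) with hT0def
  set T : ℝ → ℝ := fun r => if r < u then T0 r else r with hTdef
  have hAne : ∀ r : ℝ, r < u → (A r).Nonempty := by
    intro r hr
    obtain ⟨t, ht⟩ := hgsup (f r) (hfltM r hr)
    exact ⟨t, ht.le⟩
  have hAsub : ∀ r : ℝ, 1 / 2 < r → r < u → A r ⊆ Set.Ici r := by
    intro r h1 h2 t ht
    simp only [hAdef, Set.mem_setOf_eq] at ht
    by_contra hlt
    simp only [Set.mem_Ici, not_le] at hlt
    rcases le_or_gt t (1 / 2) with h | h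
    · rw [hg0 t h] at ht
      exact (hfposIoo r h1 h2).ne' (le_antisymm ht (zero_le))
    · have h3 : g t ≤ f t := hgf t (hlt.trans h2)
      have h4 : f t < f r := hfstrict t r h.le hlt h2.le
      exact absurd (ht.trans h3) (not_le.2 h4)
  have hAbdd : ∀ r : ℝ, 1 / 2 < r → r < u → BddBelow (A r) := by
    intro r h1 h2
    exact ⟨r, fun t ht => hAsub r h1 h2 ht⟩
  have hTr : ∀ r : ℝ, 1 / 2 < r → r < u → r ≤ T0 r := by
    intro r h1 h2
    exact le_csInf (hAne r h2) fun t ht => hAsub r h1 h2 ht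
  -- key equivalence
  have hkey : ∀ r : ℝ, 1 / 2 < r → r < u → ∀ a : ℝ, (T0 r ≤ a ↔ f r ≤ g a) := by
    intro r h1 h2 a
    constructor
    · intro h
      apply hg_rc
      intro t hat
      have hlt : sInf (A r) < t := lt_of_le_of_lt h hat
      obtain ⟨s, hs, hst⟩ := exists_lt_of_csInf_lt (hAne r h2) hlt
      exact le_trans hs (hgmono hst.le)
    · intro h
      exact csInf_le (hAbdd r h1 h2) h
  -- monotonicity of T0 on Iio u
  have hT0nonneg : ∀ r : ℝ, r < u → 0 ≤ T0 r := by
    intro r hr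
    rcases le_or_gt r (1 / 2) with h | h
    · show (0 : ℝ) ≤ sInf (A r)
      have hAuniv : A r = Set.univ := by
        ext t
        simp only [hAdef, Set.mem_setOf_eq, Set.mem_univ, iff_true, hf0 r h]
        exact zero_le
      rw [hAuniv]
      have : ¬ BddBelow (Set.univ : Set ℝ) := by
        rintro ⟨x, hx⟩
        have := hx (Set.mem_univ (x - 1))
        linarith
      rw [csInf_of_not_bddBelow this, Real.sInf_empty]
    · exact le_trans (by linarith) (hTr r h hr)
  have hT0mono : ∀ r1 r2 : ℝ, r1 ≤ r2 → r2 < u → T0 r1 ≤ T0 r2 := by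
    intro r1 r2 h12 h2u
    rcases le_or_gt r1 (1 / 2) with h | h
    · have hAuniv : A r1 = Set.univ := by
        ext t
        simp only [hAdef, Set.mem_setOf_eq, Set.mem_univ, iff_true, hf0 r1 h]
        exact zero_le
      have : ¬ BddBelow (Set.univ : Set ℝ) := by
        rintro ⟨x, hx⟩
        have := hx (Set.mem_univ (x - 1))
        linarith
      show sInf (A r1) ≤ T0 r2
      rw [hAuniv, csInf_of_not_bddBelow this, Real.sInf_empty]
      exact hT0nonneg r2 h2u
    · apply csInf_le_csInf (hAbdd r1 h (lt_of_le_of_lt h12 h2u)) (hAne r2 h2u)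
      intro t ht
      simp only [hAdef, Set.mem_setOf_eq] at ht ⊢
      exact le_trans (hfmono h12) ht
  -- measurability of T
  have hTmeas : Measurable T := by
    apply measurable_of_Iio
    intro a
    have hpre : T ⁻¹' Set.Iio a = {r | r < u ∧ T0 r < a} ∪ Set.Ico u a := by
      ext r
      simp only [Set.mem_preimage, Set.mem_Iio, Set.mem_union, Set.mem_setOf_eq, Set.mem_Ico,
        hTdef]
      by_cases hr : r < u
      · simp [hr, not_le.2 hr]
      · simp [hr, not_lt.1 hr]
    rw [hpre]
    refine MeasurableSet.union ?_ measurableSet_Ico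
    apply Set.OrdConnected.measurableSet
    constructor
    rintro x ⟨hxu, hxa⟩ y ⟨hyu, hya⟩ z hz
    refine ⟨lt_of_le_of_lt hz.2 hyu, lt_of_le_of_lt ?_ hya⟩
    exact hT0mono z y hz.2 hyu
  -- conclusion
  refine ⟨T, hTmeas, ?_, ?_⟩
  · rintro r ⟨h1, h2⟩
    have hTr' : T r = T0 r := if_pos h2
    have := hTr r h1 h2
    rw [hTr']
    exact ⟨lt_of_lt_of_le h1 this, this⟩
  · rw [hμω, hνω]
    have hμfin : IsFiniteMeasure (ω.restrict (Set.Ioo (1 / 2 : ℝ) u)) :=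
      ⟨by rw [hresIoo]; exact hMne.lt_top⟩
    have hmapfin : IsFiniteMeasure (Measure.map T (ω.restrict (Set.Ioo (1 / 2 : ℝ) u))) := by
      constructor
      rw [Measure.map_apply hTmeas MeasurableSet.univ]
      exact lt_of_le_of_lt (measure_mono (Set.subset_univ _)) (by rw [hresIoo]; exact hMne.lt_top)
    refine MeasureTheory.Measure.ext_of_Iic _ _ fun a => ?_
    rw [Measure.map_apply hTmeas measurableSet_Iic,
      Measure.restrict_apply (hTmeas measurableSet_Iic), hgIic a]
    -- analyze the sublevel set
    set c : ℝ≥0∞ := g a with hcdef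
    set B : Set ℝ := {r | r ∈ Set.Icc (1 / 2 : ℝ) u ∧ f r ≤ c} with hBdef
    have hBne : B.Nonempty := by
      refine ⟨1 / 2, ⟨le_rfl, hu.le⟩, ?_⟩
      rw [hf0 (1 / 2) le_rfl]
      exact zero_le
    have hBbdd : BddAbove B := ⟨u, fun x hx => hx.1.2⟩
    set b : ℝ := sSup B with hbdef
    have hb1 : (1 : ℝ) / 2 ≤ b :=
      le_csSup hBbdd ⟨⟨le_rfl, hu.le⟩, by rw [hf0 (1 / 2) le_rfl]; exact zero_le⟩
    have hb2 : b ≤ u := csSup_le hBne fun x hx => hx.1.2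
    have hfbc : f b ≤ c := by
      apply hf_lc
      intro t ht
      obtain ⟨s, hs, hts⟩ := exists_lt_of_lt_csSup hBne ht
      exact le_trans (hfmono hts.le) hs.2
    have hmid : ∀ t, b < t → t < u → c ≤ f t := by
      intro t hbt htu
      by_contra hlt
      push_neg at hlt
      have htB : t ∈ B := ⟨⟨le_trans hb1 hbt.le, htu.le⟩, hlt.le⟩
      exact absurd (le_csSup hBbdd htB) (not_le.2 hbt)
    have hcfb : c ≤ f b := by
      rcases eq_or_lt_of_le hb2 with hbu | hbu
      · rw [hbu, hfu u le_rfl]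
        exact hgM a
      · apply hf_rc
        intro t hbt
        rcases lt_or_ge t u with htu | htu
        · exact hmid t hbt htu
        · have hmm : b < (b + u) / 2 := by linarith
          have hmu : (b + u) / 2 < u := by linarith
          exact le_trans (hmid _ hmm hmu) (hfmono (by linarith))
    have hfb : f b = c := le_antisymm hfbc hcfb
    have hseteq : T ⁻¹' Set.Iic a ∩ Set.Ioo (1 / 2 : ℝ) u
        = Set.Iic b ∩ Set.Ioo (1 / 2 : ℝ) u := by
      ext r
      simp only [Set.mem_inter_iff, Set.mem_preimage, Set.mem_Iic, Set.mem_Ioo]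
      constructor
      · rintro ⟨h1, h2, h3⟩
        refine ⟨?_, h2, h3⟩
        have hTr' : T r = T0 r := if_pos h3
        rw [hTr'] at h1
        have hfr : f r ≤ c := (hkey r h2 h3 a).mp h1
        exact le_csSup hBbdd ⟨⟨h2.le, h3.le⟩, hfr⟩
      · rintro ⟨h1, h2, h3⟩
        refine ⟨?_, h2, h3⟩
        have hTr' : T r = T0 r := if_pos h3
        rw [hTr']
        exact (hkey r h2 h3 a).mpr (le_trans (hfmono h1) hfb.le)
    rw [hseteq]
    exact hfb
end
end

section
/- Let α ∈ (0,2) and let B[1] ⊂ ℝ² be the open disc of area 1 centered at 0 (radius 1/√π). For every ε > 0, 0 ≤ ∫_{B[1]×B[1]} |x−y|^{α−2} dx dy − ∫_{B[1]×B[1]} (|x−y|^{2−α} + ε)^{−1} dx dy ≤ (2π/α) · (2/(2−α)) · ((2−α)/α)^{α/2} · (ε / π^{α/2})^{α/2}. -/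
open MeasureTheory Filter ENNReal

noncomputable section

/-- The open disc in `ℝ²` centered at `0` with area `1` (radius `1/√π`). -/
def unitAreaDisc : Set (EuclideanSpace ℝ (Fin 2)) :=
  Metric.ball 0 (Real.sqrt Real.pi)⁻¹

/-- The Riesz energy of the unit-area disc. -/
def discRieszEnergy (α : ℝ) : ℝ≥0∞ :=
  ∫⁻ x in unitAreaDisc, ∫⁻ y in unitAreaDisc, ENNReal.ofReal (‖x - y‖ ^ (α - 2))

/-- The `ε`-regularized Riesz energy of the unit-area disc. -/
def discRieszEnergyReg (α ε : ℝ) : ℝ≥0∞ :=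
  ∫⁻ x in unitAreaDisc, ∫⁻ y in unitAreaDisc,
    ENNReal.ofReal ((‖x - y‖ ^ (2 - α) + ε)⁻¹)

local notation "E" => EuclideanSpace ℝ (Fin 2)

lemma vol_ball (x : E) {r : ℝ} (hr : 0 ≤ r) :
    volume (Metric.ball x r) = ENNReal.ofReal (Real.pi * r ^ 2) := by
  rw [EuclideanSpace.volume_ball]
  simp only [Fintype.card_fin]
  rw [show ((2:ℕ):ℝ)/2 + 1 = 2 by norm_num, Real.Gamma_two,
    Real.sq_sqrt Real.pi_pos.le, ← ENNReal.ofReal_pow hr, ← ENNReal.ofReal_mul (by positivity)]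
  ring_nf

lemma radial {s : ℝ} (hs0 : 0 < s) (hs2 : s < 2) {δ : ℝ} (hδ : 0 < δ) :
    ∫⁻ z in Metric.ball (0:E) δ, ENNReal.ofReal (‖z‖ ^ (s - 2)) ≤
      ENNReal.ofReal (2 * Real.pi * δ ^ s / s) := by
  have hs2' : s - 2 < 0 := by linarith
  have hmeas : Measurable fun z : E => ‖z‖ ^ (s - 2) := measurable_norm.pow_const _
  set a : ℝ := δ ^ (s - 2) with ha
  have ha0 : 0 < a := Real.rpow_pos_of_pos hδ _
  rw [lintegral_eq_lintegral_meas_lt _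
      (ae_of_all _ fun z => Real.rpow_nonneg (norm_nonneg z) _) hmeas.aemeasurable]
  have hres : ∀ t : ℝ, (volume.restrict (Metric.ball (0:E) δ)) {z | t < ‖z‖ ^ (s - 2)}
      = volume ({z : E | t < ‖z‖ ^ (s - 2)} ∩ Metric.ball (0:E) δ) := fun t =>
    Measure.restrict_apply (measurableSet_lt measurable_const hmeas)
  simp only [hres]
  rw [show Set.Ioi (0:ℝ) = Set.Ioc 0 a ∪ Set.Ioi a from (Set.Ioc_union_Ioi_eq_Ioi ha0.le).symm,
    lintegral_union measurableSet_Ioi (Set.Ioc_disjoint_Ioi le_rfl)]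
  have h1 : ∫⁻ t in Set.Ioc (0:ℝ) a, volume ({z : E | t < ‖z‖ ^ (s - 2)} ∩ Metric.ball (0:E) δ)
      ≤ ENNReal.ofReal (Real.pi * δ ^ 2) * ENNReal.ofReal a := by
    calc _ ≤ ∫⁻ _ in Set.Ioc (0:ℝ) a, ENNReal.ofReal (Real.pi * δ ^ 2) :=
          lintegral_mono fun t => le_trans (measure_mono Set.inter_subset_right)
            (le_of_eq (vol_ball 0 hδ.le))
      _ = ENNReal.ofReal (Real.pi * δ ^ 2) * volume (Set.Ioc (0:ℝ) a) := setLIntegral_const _ _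
      _ = _ := by rw [Real.volume_Ioc, sub_zero]
  have hp : 2 * (s - 2)⁻¹ < -1 := by
    rw [← div_eq_mul_inv, div_lt_iff_of_neg (by linarith)]
    linarith
  have h2 : ∫⁻ t in Set.Ioi a, volume ({z : E | t < ‖z‖ ^ (s - 2)} ∩ Metric.ball (0:E) δ)
      ≤ ENNReal.ofReal Real.pi * ENNReal.ofReal (δ ^ s * ((2 - s) / s)) := by
    have key : ∀ t ∈ Set.Ioi a, volume ({z : E | t < ‖z‖ ^ (s - 2)} ∩ Metric.ball (0:E) δ)
        ≤ ENNReal.ofReal Real.pi * ENNReal.ofReal (t ^ (2 * (s - 2)⁻¹)) := by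
      intro t ht
      have ht0 : 0 < t := ha0.trans ht
      have hsub : {z : E | t < ‖z‖ ^ (s - 2)} ∩ Metric.ball (0:E) δ ⊆
          Metric.ball (0:E) (t ^ (s - 2)⁻¹) := by
        intro z hz
        have hz1 : t < ‖z‖ ^ (s - 2) := hz.1
        have hz0 : 0 < ‖z‖ := by
          rcases eq_or_lt_of_le (norm_nonneg z) with h | h
          · rw [← h, Real.zero_rpow (by linarith : s - 2 ≠ 0)] at hz1; linarith
          · exact h
        have := (Real.lt_rpow_inv_iff_of_neg hz0 ht0 hs2').2 hz1
        simpa [Metric.mem_ball, dist_eq_norm] using this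
      calc volume _ ≤ volume (Metric.ball (0:E) (t ^ (s - 2)⁻¹)) := measure_mono hsub
        _ = ENNReal.ofReal (Real.pi * (t ^ (s - 2)⁻¹) ^ 2) :=
            vol_ball _ (Real.rpow_nonneg ht0.le _)
        _ = _ := by
            rw [← Real.rpow_natCast (t ^ (s - 2)⁻¹) 2, ← Real.rpow_mul ht0.le,
              ENNReal.ofReal_mul Real.pi_pos.le]
            norm_num [mul_comm]
    calc _ ≤ ∫⁻ t in Set.Ioi a, ENNReal.ofReal Real.pi * ENNReal.ofReal (t ^ (2 * (s - 2)⁻¹)) :=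
          setLIntegral_mono (measurable_const.mul ((measurable_id.pow_const _).ennreal_ofReal)) key
      _ = ENNReal.ofReal Real.pi * ∫⁻ t in Set.Ioi a, ENNReal.ofReal (t ^ (2 * (s - 2)⁻¹)) :=
          lintegral_const_mul _ ((measurable_id.pow_const _).ennreal_ofReal)
      _ ≤ _ := by
          gcongr
          rw [← ofReal_integral_eq_lintegral_ofReal (integrableOn_Ioi_rpow_of_lt hp ha0)
            ((ae_restrict_iff' measurableSet_Ioi).2 (ae_of_all _ fun t ht =>
              Real.rpow_nonneg (le_of_lt (ha0.trans ht)) _))]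
          rw [integral_Ioi_rpow_of_lt hp ha0]
          apply ENNReal.ofReal_le_ofReal
          have hne : s - 2 ≠ 0 := by linarith
          have hsne : s ≠ 0 := hs0.ne'
          have hps : 2 * (s - 2)⁻¹ + 1 = s / (s - 2) := by field_simp; ring
          rw [hps, ha, ← Real.rpow_mul hδ.le,
            show (s - 2) * (s / (s - 2)) = s by rw [mul_comm, div_mul_cancel₀ _ hne]]
          have : -δ ^ s / (s / (s - 2)) = δ ^ s * ((2 - s) / s) := by
            field_simp; ring
          exact le_of_eq this
  calc _ ≤ ENNReal.ofReal (Real.pi * δ ^ 2) * ENNReal.ofReal a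
        + ENNReal.ofReal Real.pi * ENNReal.ofReal (δ ^ s * ((2 - s) / s)) := add_le_add h1 h2
    _ = ENNReal.ofReal (Real.pi * δ ^ 2 * a + Real.pi * (δ ^ s * ((2 - s) / s))) := by
        rw [← ENNReal.ofReal_mul (by positivity), ← ENNReal.ofReal_mul Real.pi_pos.le,
          ← ENNReal.ofReal_add (by positivity)
            (mul_nonneg Real.pi_pos.le (mul_nonneg (Real.rpow_nonneg hδ.le _)
              (div_nonneg (by linarith) hs0.le)))]
    _ ≤ _ := by
        apply ENNReal.ofReal_le_ofReal
        have hda : δ ^ 2 * a = δ ^ s := by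
          rw [ha, ← Real.rpow_natCast δ 2, ← Real.rpow_add hδ]
          norm_num
        have hne : s ≠ 0 := hs0.ne'
        rw [mul_assoc, hda]
        apply le_of_eq
        field_simp
        ring

lemma lint_translate (x : E) (δ : ℝ) (f : ℝ → ℝ≥0∞) :
    ∫⁻ y in Metric.ball x δ, f ‖x - y‖ = ∫⁻ z in Metric.ball (0:E) δ, f ‖z‖ := by
  have hT : MeasurePreserving (fun y : E => x - y) volume volume :=
    Measure.measurePreserving_sub_left volume x
  have hemb : MeasurableEmbedding (fun y : E => x - y) :=
    (MeasurableEquiv.subLeft x).measurableEmbedding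
  have hpre : (fun y : E => x - y) ⁻¹' (Metric.ball (0:E) δ) = Metric.ball x δ := by
    ext y
    simp [Metric.mem_ball, dist_eq_norm, norm_sub_rev]
  calc ∫⁻ y in Metric.ball x δ, f ‖x - y‖
      = ∫⁻ y in (fun y : E => x - y) ⁻¹' (Metric.ball (0:E) δ), f ‖x - y‖ := by
        rw [hpre]
    _ = ∫⁻ z in Metric.ball (0:E) δ, f ‖z‖ :=
        hT.setLIntegral_comp_preimage_emb hemb (fun z => f ‖z‖) _

lemma rearr {s : ℝ} (hs2 : s < 2) {R : ℝ} (hR : 0 < R) (x : E) :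
    ∫⁻ y in Metric.ball (0:E) R, ENNReal.ofReal (‖x - y‖ ^ (s - 2)) ≤
      ∫⁻ y in Metric.ball x R, ENNReal.ofReal (‖x - y‖ ^ (s - 2)) := by
  set B := Metric.ball (0:E) R
  set B' := Metric.ball x R
  set g : E → ℝ≥0∞ := fun y => ENNReal.ofReal (‖x - y‖ ^ (s - 2)) with hg
  have hmB : MeasurableSet B := measurableSet_ball
  have hmB' : MeasurableSet B' := measurableSet_ball
  have hgm : Measurable g := ((measurable_const.sub measurable_id).norm.pow_const _).ennreal_ofReal
  have hvol : volume (B \ B') = volume (B' \ B) := by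
    have h1 : volume (B ∩ B') + volume (B \ B') = volume B := measure_inter_add_diff B hmB'
    have h2 : volume (B' ∩ B) + volume (B' \ B) = volume B' := measure_inter_add_diff B' hmB
    have hBB' : volume B = volume B' := by rw [vol_ball _ hR.le, vol_ball _ hR.le]
    rw [Set.inter_comm] at h2
    have hfin : volume (B ∩ B') ≠ ∞ :=
      (lt_of_le_of_lt (measure_mono Set.inter_subset_left) measure_ball_lt_top).ne
    rw [← ENNReal.add_right_inj hfin]
    rw [h1, h2, hBB']
  have hmid : ∫⁻ y in B \ B', g y ≤ ∫⁻ y in B' \ B, g y := by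
    have hstep1 : ∫⁻ y in B \ B', g y ≤ ENNReal.ofReal (R ^ (s - 2)) * volume (B \ B') := by
      calc ∫⁻ y in B \ B', g y ≤ ∫⁻ _ in B \ B', ENNReal.ofReal (R ^ (s - 2)) := by
            apply setLIntegral_mono measurable_const
            intro y hy
            apply ENNReal.ofReal_le_ofReal
            apply Real.rpow_le_rpow_of_nonpos hR _ (by linarith)
            have : ¬ dist y x < R := fun h => hy.2 (Metric.mem_ball.2 h)
            rw [dist_eq_norm, norm_sub_rev] at this
            linarith [not_lt.1 this]
        _ = _ := setLIntegral_const _ _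
    have hstep2 : ENNReal.ofReal (R ^ (s - 2)) * volume (B' \ B) ≤ ∫⁻ y in B' \ B, g y := by
      rw [← setLIntegral_const (B' \ B) (ENNReal.ofReal (R ^ (s - 2)))]
      apply lintegral_mono_ae
      have h1 : ∀ᵐ (y : E) ∂volume, y ≠ x := by
        have h0 : volume ({x} : Set E) = 0 := measure_singleton x
        rw [ae_iff]
        simpa using h0
      refine (ae_restrict_iff' (hmB'.diff hmB)).2 ?_
      filter_upwards [h1] with y hy hymem
      apply ENNReal.ofReal_le_ofReal
      have hpos : 0 < ‖x - y‖ := by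
        rw [norm_pos_iff, sub_ne_zero]
        exact fun h => hy h.symm
      apply Real.rpow_le_rpow_of_nonpos hpos _ (by linarith)
      have := Metric.mem_ball.1 hymem.1
      rw [dist_eq_norm, norm_sub_rev] at this
      linarith
    calc ∫⁻ y in B \ B', g y ≤ ENNReal.ofReal (R ^ (s - 2)) * volume (B \ B') := hstep1
      _ = ENNReal.ofReal (R ^ (s - 2)) * volume (B' \ B) := by rw [hvol]
      _ ≤ _ := hstep2
  have hsplit : ∀ (S T : Set E), MeasurableSet S → MeasurableSet T →
      ∫⁻ y in S, g y = (∫⁻ y in S ∩ T, g y) + ∫⁻ y in S \ T, g y := by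
    intro S T hS hT
    rw [← lintegral_union (hS.diff hT)
      (Set.disjoint_sdiff_right.mono_left Set.inter_subset_right), Set.inter_union_diff]
  calc ∫⁻ y in B, g y = (∫⁻ y in B ∩ B', g y) + ∫⁻ y in B \ B', g y := hsplit B B' hmB hmB'
    _ ≤ (∫⁻ y in B' ∩ B, g y) + ∫⁻ y in B' \ B, g y := by
        rw [Set.inter_comm]; exact add_le_add le_rfl hmid
    _ = ∫⁻ y in B', g y := (hsplit B' B hmB' hmB).symm

lemma ptwise {α ε δ r : ℝ} (hα2 : α < 2) (hε : 0 < ε) (hδ : 0 < δ) (hr : δ ≤ r) :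
    r ^ (α - 2) ≤ (r ^ (2 - α) + ε)⁻¹ + ε / δ ^ (2 - α) * r ^ (α - 2) := by
  have hr0 : 0 < r := hδ.trans_le hr
  set t : ℝ := r ^ (2 - α) with htdef
  have ht : 0 < t := Real.rpow_pos_of_pos hr0 _
  have hrinv : r ^ (α - 2) = t⁻¹ := by
    rw [show α - 2 = -(2 - α) by ring, Real.rpow_neg hr0.le]
  set d : ℝ := δ ^ (2 - α) with hddef
  have hd : 0 < d := Real.rpow_pos_of_pos hδ _
  have hdt : d ≤ t := Real.rpow_le_rpow hδ.le hr (by linarith)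
  rw [hrinv]
  have key : t⁻¹ - (t + ε)⁻¹ = ε / (t * (t + ε)) := by
    field_simp
    ring
  have h2 : ε / (t * (t + ε)) ≤ ε / d * t⁻¹ := by
    rw [← div_eq_mul_inv (ε / d) t, div_div]
    apply div_le_div_of_nonneg_left hε.le (by positivity)
    nlinarith
  linarith

/-- Error bound for the regularization of the Riesz energy of the unit-area disc:
`0 ≤ V_α(B[1]) − V_{α,ε}(B[1]) ≤ (2π/α)(2/(2-α))((2-α)/α)^(α/2) (ε/π^(α/2))^(α/2)`. -/
theorem statement18 (α : ℝ) (hα0 : 0 < α) (hα2 : α < 2) (ε : ℝ) (hε : 0 < ε) :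
    discRieszEnergyReg α ε ≤ discRieszEnergy α ∧
      discRieszEnergy α ≤ discRieszEnergyReg α ε
        + ENNReal.ofReal
            (2 * Real.pi / α * (2 / (2 - α)) * ((2 - α) / α) ^ (α / 2)
              * (ε / Real.pi ^ (α / 2)) ^ (α / 2)) := by
  have hπ := Real.pi_pos
  set R : ℝ := (Real.sqrt Real.pi)⁻¹ with hRdef
  have hR : 0 < R := by positivity
  have hBdef : unitAreaDisc = Metric.ball (0:E) R := rfl
  have hxae : ∀ x : E, ∀ᵐ (y : E) ∂(volume.restrict unitAreaDisc), y ≠ x := by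
    intro x
    apply ae_restrict_of_ae
    have h0 : volume ({x} : Set E) = 0 := measure_singleton x
    rw [ae_iff]
    simpa using h0
  constructor
  · refine lintegral_mono fun x => ?_
    apply lintegral_mono_ae
    filter_upwards [hxae x] with y hy
    apply ENNReal.ofReal_le_ofReal
    have hpos : 0 < ‖x - y‖ := by
      rw [norm_pos_iff, sub_ne_zero]
      exact fun h => hy h.symm
    have ht : 0 < ‖x - y‖ ^ (2 - α) := Real.rpow_pos_of_pos hpos _
    rw [show α - 2 = -(2 - α) by ring, Real.rpow_neg hpos.le]
    exact inv_anti₀ ht (le_add_of_nonneg_right hε.le)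
  · set p : ℝ := Real.pi ^ (α / 2) with hpdef
    have hp : 0 < p := Real.rpow_pos_of_pos hπ _
    set D2 : ℝ := ((2 - α) / α) * (ε / p) with hD2def
    have hD2 : 0 < D2 := mul_pos (div_pos (by linarith) hα0) (div_pos hε hp)
    set δ : ℝ := Real.sqrt D2 with hδdef
    have hδ : 0 < δ := Real.sqrt_pos.2 hD2
    set C1 : ℝ := 2 * Real.pi * δ ^ α / α with hC1def
    set C2 : ℝ := ε / δ ^ (2 - α) * (2 * Real.pi * R ^ α / α) with hC2def
    have hC1nn : 0 ≤ C1 := by positivity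
    have hC2nn : 0 ≤ C2 := by positivity
    -- inner bound
    have hinner : ∀ x : E,
        (∫⁻ y in unitAreaDisc, ENNReal.ofReal (‖x - y‖ ^ (α - 2))) ≤
          (∫⁻ y in unitAreaDisc, ENNReal.ofReal ((‖x - y‖ ^ (2 - α) + ε)⁻¹))
            + ENNReal.ofReal (C1 + C2) := by
      intro x
      set f1 : E → ℝ≥0∞ := fun y => ENNReal.ofReal ((‖x - y‖ ^ (2 - α) + ε)⁻¹) with hf1
      set f0 : E → ℝ≥0∞ := fun y => ENNReal.ofReal (‖x - y‖ ^ (α - 2)) with hf0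
      set f2 : E → ℝ≥0∞ := (Metric.ball x δ).indicator f0 with hf2
      set f3 : E → ℝ≥0∞ := fun y => ENNReal.ofReal (ε / δ ^ (2 - α)) * f0 y with hf3
      have hf0m : Measurable f0 :=
        ((measurable_const.sub measurable_id).norm.pow_const _).ennreal_ofReal
      have hf1m : Measurable f1 :=
        ((((measurable_const.sub measurable_id).norm.pow_const _).add_const ε).inv).ennreal_ofReal
      have hf2m : Measurable f2 := hf0m.indicator measurableSet_ball
      have hpt : ∀ y : E, f0 y ≤ f1 y + (f2 y + f3 y) := by
        intro y
        by_cases hy : y ∈ Metric.ball x δ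
        · have : f0 y ≤ f2 y + f3 y := by
            rw [hf2, Set.indicator_of_mem hy]
            exact le_add_right le_rfl
          exact le_add_left this
        · rw [hf2, Set.indicator_of_notMem hy, zero_add]
          show ENNReal.ofReal (‖x - y‖ ^ (α - 2)) ≤
            ENNReal.ofReal ((‖x - y‖ ^ (2 - α) + ε)⁻¹)
              + ENNReal.ofReal (ε / δ ^ (2 - α)) * ENNReal.ofReal (‖x - y‖ ^ (α - 2))
          rw [← ENNReal.ofReal_mul (by positivity),
            ← ENNReal.ofReal_add (by positivity) (by positivity)]
          apply ENNReal.ofReal_le_ofReal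
          have hr : δ ≤ ‖x - y‖ := by
            have : ¬ dist y x < δ := fun h => hy (Metric.mem_ball.2 h)
            rw [dist_eq_norm, norm_sub_rev] at this
            linarith [not_lt.1 this]
          exact ptwise hα2 hε hδ hr
      have hbound2 : ∫⁻ y in unitAreaDisc, f2 y ≤ ENNReal.ofReal C1 := by
        rw [hf2, lintegral_indicator measurableSet_ball, Measure.restrict_restrict
          measurableSet_ball]
        calc ∫⁻ y in Metric.ball x δ ∩ unitAreaDisc, f0 y
            ≤ ∫⁻ y in Metric.ball x δ, f0 y :=
              lintegral_mono' (Measure.restrict_mono Set.inter_subset_left le_rfl) le_rfl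
          _ = ∫⁻ z in Metric.ball (0:E) δ, ENNReal.ofReal (‖z‖ ^ (α - 2)) :=
              lint_translate x δ (fun r => ENNReal.ofReal (r ^ (α - 2)))
          _ ≤ ENNReal.ofReal C1 := radial hα0 hα2 hδ
      have hbound0 : ∫⁻ y in unitAreaDisc, f0 y ≤ ENNReal.ofReal (2 * Real.pi * R ^ α / α) := by
        rw [hBdef]
        calc ∫⁻ y in Metric.ball (0:E) R, f0 y ≤ ∫⁻ y in Metric.ball x R, f0 y := rearr hα2 hR x
          _ = ∫⁻ z in Metric.ball (0:E) R, ENNReal.ofReal (‖z‖ ^ (α - 2)) :=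
              lint_translate x R (fun r => ENNReal.ofReal (r ^ (α - 2)))
          _ ≤ _ := radial hα0 hα2 hR
      have hbound3 : ∫⁻ y in unitAreaDisc, f3 y ≤ ENNReal.ofReal C2 := by
        rw [hf3, lintegral_const_mul _ hf0m, hC2def,
          ENNReal.ofReal_mul (by positivity : (0:ℝ) ≤ ε / δ ^ (2 - α))]
        exact mul_le_mul_right hbound0 _
      calc ∫⁻ y in unitAreaDisc, f0 y ≤ ∫⁻ y in unitAreaDisc, (f1 y + (f2 y + f3 y)) :=
            lintegral_mono hpt
        _ = (∫⁻ y in unitAreaDisc, f1 y) + ∫⁻ y in unitAreaDisc, (f2 y + f3 y) :=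
            lintegral_add_left hf1m _
        _ = (∫⁻ y in unitAreaDisc, f1 y)
            + ((∫⁻ y in unitAreaDisc, f2 y) + ∫⁻ y in unitAreaDisc, f3 y) := by
            rw [lintegral_add_left hf2m]
        _ ≤ (∫⁻ y in unitAreaDisc, f1 y) + (ENNReal.ofReal C1 + ENNReal.ofReal C2) :=
            add_le_add le_rfl (add_le_add hbound2 hbound3)
        _ = _ := by rw [ENNReal.ofReal_add hC1nn hC2nn]
    -- outer integration
    have hvol1 : volume unitAreaDisc = 1 := by
      rw [hBdef, vol_ball 0 hR.le, hRdef, inv_pow, Real.sq_sqrt hπ.le,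
        mul_inv_cancel₀ hπ.ne', ENNReal.ofReal_one]
    have harith : C1 + C2 ≤ 2 * Real.pi / α * (2 / (2 - α)) * ((2 - α) / α) ^ (α / 2)
        * (ε / Real.pi ^ (α / 2)) ^ (α / 2) := by
      have hδα : δ ^ α = D2 ^ (α / 2) := by
        rw [hδdef, Real.sqrt_eq_rpow, ← Real.rpow_mul hD2.le,
          show 1 / 2 * α = α / 2 by ring]
      have hδ2α : δ ^ (2 - α) = D2 / δ ^ α := by
        rw [eq_div_iff (by positivity : δ ^ α ≠ 0), ← Real.rpow_add hδ,
          show 2 - α + α = (2:ℝ) by ring, show ((2:ℝ) : ℝ) = ((2:ℕ) : ℝ) by norm_num,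
          Real.rpow_natCast, hδdef, Real.sq_sqrt hD2.le]
      have hRα : R ^ α = p⁻¹ := by
        rw [hRdef, Real.inv_rpow (Real.sqrt_nonneg _), Real.sqrt_eq_rpow,
          ← Real.rpow_mul hπ.le, show 1 / 2 * α = α / 2 by ring, hpdef]
      have hKform : ((2 - α) / α) ^ (α / 2) * (ε / Real.pi ^ (α / 2)) ^ (α / 2)
          = D2 ^ (α / 2) := by
        rw [hD2def, ← Real.mul_rpow (div_nonneg (by linarith) hα0.le) (by positivity)]
      apply le_of_eq
      have hδαpos : 0 < δ ^ α := Real.rpow_pos_of_pos hδ _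
      have h2α : (2:ℝ) - α ≠ 0 := by linarith
      rw [hC1def, hC2def, hδ2α, hRα, mul_assoc (2 * Real.pi / α * (2 / (2 - α))), hKform, ← hδα,
        hD2def]
      field_simp
      ring
    calc discRieszEnergy α
        ≤ ∫⁻ x in unitAreaDisc,
            ((∫⁻ y in unitAreaDisc, ENNReal.ofReal ((‖x - y‖ ^ (2 - α) + ε)⁻¹))
              + ENNReal.ofReal (C1 + C2)) := lintegral_mono hinner
      _ = discRieszEnergyReg α ε + ENNReal.ofReal (C1 + C2) * volume unitAreaDisc := by
          rw [lintegral_add_right _ measurable_const, setLIntegral_const]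
          rfl
      _ = discRieszEnergyReg α ε + ENNReal.ofReal (C1 + C2) := by rw [hvol1, mul_one]
      _ ≤ _ := add_le_add le_rfl (ENNReal.ofReal_le_ofReal harith)
end
end
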